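/- arXiv:2205.11921 — 7 statements merged into one kernel-verified Lean document; each statement's English description precedes it below -/
import Mathlib

section
/- Let n ≥ 1, let g ∈ ℝⁿ be nonzero, let 1 ≤ k ≤ n and τ > 0. Let S ⊆ {1,…,n} be a set of k indices such that |g_i| ≥ |g_j| for all i ∈ S and j ∉ S, and let g^topk ∈ ℝⁿ be the vector with (g^topk)_i = g_i for i ∈ S and (g^topk)_i = 0 otherwise. Then the vector v* = −τ · g^topk / ‖g^topk‖₂ belongs to C_k(τ) and satisfies ⟨v*, g⟩ ≤ ⟨v, g⟩ for every v ∈ C_k(τ); moreover ⟨v*, g⟩ = −τ‖g^topk‖₂. -/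
open RealInnerProductSpace

/-- The k-support norm ball of radius τ in ℝⁿ: the convex hull of all k-sparse
vectors of Euclidean norm at most τ. -/
noncomputable def kSupportBall (n k : ℕ) (τ : ℝ) : Set (EuclideanSpace ℝ (Fin n)) :=
  convexHull ℝ {v : EuclideanSpace ℝ (Fin n) | {i | v i ≠ 0}.ncard ≤ k ∧ ‖v‖ ≤ τ}

private lemma sum_le_sum_of_card_le {α : Type*} [DecidableEq α]
    (A B : Finset α) (f : α → ℝ) (hf : ∀ b, 0 ≤ f b)
    (hcard : A.card ≤ B.card) (h : ∀ a ∈ A, ∀ b ∈ B, f a ≤ f b) :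
    ∑ a ∈ A, f a ≤ ∑ b ∈ B, f b := by
  rcases B.eq_empty_or_nonempty with hB | hB
  · subst hB
    simp only [Finset.card_empty, Nat.le_zero, Finset.card_eq_zero] at hcard
    simp [hcard]
  · set m := B.inf' hB f with hm
    obtain ⟨b0, hb0, hb0m⟩ := B.exists_mem_eq_inf' hB f
    have hm0 : 0 ≤ m := by rw [hm, hb0m]; exact hf b0
    calc ∑ a ∈ A, f a ≤ A.card • m :=
          Finset.sum_le_card_nsmul _ _ _ (fun a ha => Finset.le_inf' hB f (fun b hb => h a ha b hb))
      _ ≤ B.card • m := by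
          simp only [nsmul_eq_mul]
          exact mul_le_mul_of_nonneg_right (Nat.cast_le.mpr hcard) hm0
      _ ≤ ∑ b ∈ B, f b := Finset.card_nsmul_le_sum _ _ _ (fun b hb => Finset.inf'_le f hb)

/-- the LMO solution over the k-support norm ball. -/
theorem kSupport_lmo (n k : ℕ) (hn : 1 ≤ n) (hk1 : 1 ≤ k) (hkn : k ≤ n)
    (τ : ℝ) (hτ : 0 < τ)
    (g : EuclideanSpace ℝ (Fin n)) (hg : g ≠ 0)
    (S : Finset (Fin n)) (hScard : S.card = k)
    (htop : ∀ i ∈ S, ∀ j ∉ S, |g j| ≤ |g i|)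
    (gtop : EuclideanSpace ℝ (Fin n))
    (hgtop : ∀ i, gtop i = if i ∈ S then g i else 0)
    (vstar : EuclideanSpace ℝ (Fin n))
    (hvstar : vstar = (-(τ / ‖gtop‖)) • gtop) :
    vstar ∈ kSupportBall n k τ ∧
    (∀ v ∈ kSupportBall n k τ, ⟪vstar, g⟫ ≤ ⟪v, g⟫) ∧
    ⟪vstar, g⟫ = -(τ * ‖gtop‖) := by
  classical
  -- gtop ≠ 0
  have hgtop_ne : gtop ≠ 0 := by
    intro h0
    apply hg
    have hSz : ∀ i ∈ S, g i = 0 := by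
      intro i hi
      have := hgtop i
      rw [h0] at this
      simpa [hi] using this.symm
    obtain ⟨i0, hi0⟩ : S.Nonempty := Finset.card_pos.mp (by omega)
    ext j
    by_cases hj : j ∈ S
    · simpa using hSz j hj
    · have h1 := htop i0 hi0 j hj
      rw [hSz i0 hi0] at h1
      have : g j = 0 := abs_nonpos_iff.mp (by simpa using h1)
      simp [this]
  have hng : 0 < ‖gtop‖ := norm_pos_iff.mpr hgtop_ne
  -- inner product value
  have hinner_gg : ⟪gtop, g⟫ = ‖gtop‖ ^ 2 := by
    rw [← real_inner_self_eq_norm_sq]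
    simp only [PiLp.inner_apply, RCLike.inner_apply, conj_trivial]
    apply Finset.sum_congr rfl
    intro i _
    rw [hgtop i]
    by_cases hi : i ∈ S <;> simp [hi]
  have hval : ⟪vstar, g⟫ = -(τ * ‖gtop‖) := by
    rw [hvstar, real_inner_smul_left, hinner_gg]
    field_simp
  -- norm of vstar
  have hnvstar : ‖vstar‖ = τ := by
    rw [hvstar, norm_smul]
    rw [Real.norm_eq_abs, abs_neg, abs_div, abs_of_pos hτ, abs_of_pos hng]
    field_simp
  -- membership
  have hmem : vstar ∈ kSupportBall n k τ := by
    apply subset_convexHull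
    constructor
    · have hsub : {i | vstar i ≠ 0} ⊆ (↑S : Set (Fin n)) := by
        intro i hi
        simp only [Set.mem_setOf_eq] at hi
        by_contra hiS
        apply hi
        rw [hvstar]
        show -(τ / ‖gtop‖) * gtop i = 0
        rw [hgtop i]
        simp only [Finset.mem_coe] at hiS
        simp [hiS]
      calc {i | vstar i ≠ 0}.ncard ≤ (↑S : Set (Fin n)).ncard :=
            Set.ncard_le_ncard hsub (S.finite_toSet)
        _ = k := by rw [Set.ncard_coe_finset, hScard]
    · rw [hnvstar]
  refine ⟨hmem, ?_, hval⟩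
  -- minimality
  intro v hv
  rw [hval]
  have hconv : Convex ℝ {w : EuclideanSpace ℝ (Fin n) | -(τ * ‖gtop‖) ≤ ⟪w, g⟫} := by
    apply convex_halfSpace_ge
    exact ⟨fun x y => inner_add_left x y g, fun c x => real_inner_smul_left x g c⟩
  refine convexHull_min ?_ hconv hv
  -- generators
  rintro u ⟨hu_sparse, hu_norm⟩
  simp only [Set.mem_setOf_eq] at hu_sparse hu_norm ⊢
  set T : Finset (Fin n) := Finset.univ.filter (fun i => u i ≠ 0) with hT
  have hTset : {i | u i ≠ 0} = (↑T : Set (Fin n)) := by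
    ext i; simp [hT]
  have hTcard : T.card ≤ S.card := by
    rw [hScard]
    rw [hTset, Set.ncard_coe_finset] at hu_sparse
    exact hu_sparse
  set w : EuclideanSpace ℝ (Fin n) := WithLp.toLp 2 (fun i => if i ∈ T then g i else 0 : Fin n → ℝ) with hw
  have hwi : ∀ i, w i = if i ∈ T then g i else 0 := fun i => rfl
  -- ⟪u, g⟫ = ⟪u, w⟫
  have huw : ⟪u, g⟫ = ⟪u, w⟫ := by
    simp only [PiLp.inner_apply, RCLike.inner_apply, conj_trivial]
    apply Finset.sum_congr rfl
    intro i _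
    rw [hwi i]
    by_cases hi : i ∈ T
    · simp [hi]
    · have : u i = 0 := by
        by_contra h
        exact hi (by simp [hT, h])
      simp [this]
  -- ‖w‖ ≤ ‖gtop‖
  have hwnorm : ‖w‖ ≤ ‖gtop‖ := by
    rw [EuclideanSpace.norm_eq, EuclideanSpace.norm_eq]
    apply Real.sqrt_le_sqrt
    have hGw : ∑ i : Fin n, ‖w i‖ ^ 2 = ∑ i ∈ T, ‖g i‖ ^ 2 := by
      rw [← Finset.univ_inter T, ← Finset.sum_ite_mem]
      apply Finset.sum_congr rfl
      intro i _
      rw [hwi i]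
      by_cases hi : i ∈ T <;> simp [hi]
    have hGt : ∑ i : Fin n, ‖gtop i‖ ^ 2 = ∑ i ∈ S, ‖g i‖ ^ 2 := by
      rw [← Finset.univ_inter S, ← Finset.sum_ite_mem]
      apply Finset.sum_congr rfl
      intro i _
      rw [hgtop i]
      by_cases hi : i ∈ S <;> simp [hi]
    rw [hGw, hGt]
    -- exchange argument
    have h1 : ∑ i ∈ T ∩ S, ‖g i‖ ^ 2 + ∑ i ∈ T \ S, ‖g i‖ ^ 2 = ∑ i ∈ T, ‖g i‖ ^ 2 :=
      Finset.sum_inter_add_sum_sdiff T S _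
    have h2 : ∑ i ∈ S ∩ T, ‖g i‖ ^ 2 + ∑ i ∈ S \ T, ‖g i‖ ^ 2 = ∑ i ∈ S, ‖g i‖ ^ 2 :=
      Finset.sum_inter_add_sum_sdiff S T _
    rw [← h1, ← h2, Finset.inter_comm T S]
    apply add_le_add_right
    apply sum_le_sum_of_card_le
    · intro b; positivity
    · have hc1 := Finset.card_inter_add_card_sdiff T S
      have hc2 := Finset.card_inter_add_card_sdiff S T
      rw [Finset.inter_comm S T] at hc2
      omega
    · intro a ha b hb
      have ha' := Finset.mem_sdiff.mp ha
      have hb' := Finset.mem_sdiff.mp hb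
      have := htop b hb'.1 a ha'.2
      simp only [Real.norm_eq_abs]
      exact pow_le_pow_left₀ (abs_nonneg _) this 2
  -- conclude
  rw [huw]
  have hcs : |⟪u, w⟫| ≤ ‖u‖ * ‖w‖ := abs_real_inner_le_norm u w
  have h1 : -(‖u‖ * ‖w‖) ≤ ⟪u, w⟫ := neg_le_of_abs_le hcs |>.trans_eq rfl
  refine le_trans ?_ h1
  rw [neg_le_neg_iff]
  exact mul_le_mul hu_norm hwnorm (norm_nonneg _) hτ.le
end

section
/- Let G ∈ ℝ^{n×m} be a nonzero matrix with singular value decomposition G = Σ_{i=1}^r u_i σ_i v_iᵀ, where σ₁ ≥ σ₂ ≥ … ≥ σ_r > 0 are the nonzero singular values of G with corresponding left singular vectors u_i ∈ ℝⁿ and right singular vectors v_i ∈ ℝᵐ. Let 1 ≤ k and τ > 0, and set s = min(k, r). Then the matrix W* = −(τ / √(σ₁² + … + σ_s²)) · Σ_{i=1}^s u_i σ_i v_iᵀ belongs to C_k^σ(τ) and satisfies ⟨W*, G⟩_F ≤ ⟨W, G⟩_F for every W ∈ C_k^σ(τ); moreover ⟨W*, G⟩_F = −τ√(σ₁² + …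 + σ_s²). -/
open Finset

/-- Frobenius inner product of two real matrices. -/
def frobInner {n m : ℕ} (A B : Matrix (Fin n) (Fin m) ℝ) : ℝ :=
  ∑ i, ∑ j, A i j * B i j

/-- Frobenius norm of a real matrix. -/
noncomputable def frobNorm {n m : ℕ} (A : Matrix (Fin n) (Fin m) ℝ) : ℝ :=
  Real.sqrt (∑ i, ∑ j, (A i j) ^ 2)

/-- The spectral-k-support norm ball of radius τ: the convex hull of all
matrices of rank at most k whose vector of singular values has Euclidean norm
(i.e. whose Frobenius norm) at most τ. -/
noncomputable def spectralKSupportBall (n m k : ℕ) (τ : ℝ) :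
    Set (Matrix (Fin n) (Fin m) ℝ) :=
  convexHull ℝ {W : Matrix (Fin n) (Fin m) ℝ | W.rank ≤ k ∧ frobNorm W ≤ τ}

lemma sum_sq_combo {d N : ℕ} (Q : Fin d → Fin N → ℝ)
    (hQ : ∀ j j', ∑ y, Q j y * Q j' y = if j = j' then (1:ℝ) else 0)
    (s : Finset (Fin d)) (c : Fin d → ℝ) :
    ∑ y, (∑ j ∈ s, c j * Q j y) ^ 2 = ∑ j ∈ s, c j ^ 2 := by
  have h : ∀ y, (∑ j ∈ s, c j * Q j y) ^ 2
      = ∑ j ∈ s, ∑ j' ∈ s, (c j * c j') * (Q j y * Q j' y) := by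
    intro y
    rw [sq, Finset.sum_mul_sum]
    exact Finset.sum_congr rfl fun j _ => Finset.sum_congr rfl fun j' _ => by ring
  simp_rw [h]
  rw [Finset.sum_comm]
  refine Finset.sum_congr rfl fun j hj => ?_
  rw [Finset.sum_comm]
  have h2 : ∀ j' ∈ s, (∑ y, (c j * c j') * (Q j y * Q j' y)) = if j = j' then c j ^ 2 else 0 := by
    intro j' _
    rw [← Finset.mul_sum, hQ]
    split
    · rename_i hjj; subst hjj; ring
    · ring
  rw [Finset.sum_congr rfl h2, Finset.sum_ite_eq s j (fun _ => c j ^ 2), if_pos hj]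

/-- Bessel's inequality, concrete form. -/
lemma bessel_concrete {r N : ℕ} (e : Fin r → Fin N → ℝ)
    (he : ∀ i j, ∑ x, e i x * e j x = if i = j then (1:ℝ) else 0)
    (y : Fin N → ℝ) : ∑ i, (∑ x, e i x * y x) ^ 2 ≤ ∑ x, y x ^ 2 := by
  set c : Fin r → ℝ := fun i => ∑ x, e i x * y x with hc
  have h0 : (0:ℝ) ≤ ∑ x, (y x - ∑ i, c i * e i x) ^ 2 :=
    Finset.sum_nonneg fun x _ => sq_nonneg _
  have hexp : ∑ x, (y x - ∑ i, c i * e i x) ^ 2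
      = ∑ x, y x ^ 2 - 2 * ∑ i, c i ^ 2 + ∑ i, c i ^ 2 := by
    have e1 : ∀ x, (y x - ∑ i, c i * e i x) ^ 2
        = y x ^ 2 - 2 * (y x * ∑ i, c i * e i x) + (∑ i, c i * e i x) ^ 2 := fun x => by ring
    simp_rw [e1]
    rw [Finset.sum_add_distrib, Finset.sum_sub_distrib, sum_sq_combo e he Finset.univ c]
    congr 1
    rw [← Finset.mul_sum]
    congr 1
    have e2 : ∀ x, y x * ∑ i, c i * e i x = ∑ i, c i * (e i x * y x) := by
      intro x
      rw [Finset.mul_sum]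
      exact Finset.sum_congr rfl fun i _ => by ring
    simp_rw [e2]
    rw [Finset.sum_comm]
    have e3 : ∀ i : Fin r, ∑ x, c i * (e i x * y x) = c i ^ 2 := by
      intro i
      rw [← Finset.mul_sum]
      have hci : ∑ x, e i x * y x = c i := rfl
      rw [hci]; ring
    simp_rw [e3]
  rw [hexp] at h0
  have : ∑ i, c i ^ 2 ≤ ∑ x, y x ^ 2 := by linarith
  exact this

lemma card_filter_lt (r k : ℕ) (hkr : k ≤ r) :
    (Finset.univ.filter (fun i : Fin r => (i : ℕ) < k)).card = k := by
  rw [← Fintype.card_fin k]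
  apply Finset.card_bij' (fun (i : Fin r) hi => (⟨(i : ℕ), by
      simpa using (Finset.mem_filter.mp hi).2⟩ : Fin k))
    (fun (j : Fin k) _ => (⟨(j : ℕ), lt_of_lt_of_le j.2 hkr⟩ : Fin r))
  · intro a ha; simp
  · intro a ha; simp [Fin.ext_iff]
  · intro a ha; simp [Fin.ext_iff]
  · intro a ha; simp

/-- rearrangement-type bound: weights in `[0,1]` summing to at most `k`. -/
lemma weight_bound {r k : ℕ} (σ : Fin r → ℝ) (hσpos : ∀ i, 0 ≤ σ i)
    (hσdec : ∀ i j : Fin r, i ≤ j → σ j ≤ σ i)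
    (w : Fin r → ℝ) (hw0 : ∀ i, 0 ≤ w i) (hw1 : ∀ i, w i ≤ 1)
    (hws : ∑ i, w i ≤ (k : ℝ)) :
    ∑ i, σ i ^ 2 * w i ≤ ∑ i ∈ Finset.univ.filter (fun i : Fin r => (i : ℕ) < k), σ i ^ 2 := by
  by_cases hkr : r ≤ k
  · have hfil : Finset.univ.filter (fun i : Fin r => (i : ℕ) < k)
        = (Finset.univ : Finset (Fin r)) := by
      apply Finset.filter_true_of_mem
      intro i _
      exact lt_of_lt_of_le i.2 hkr
    rw [hfil]
    apply Finset.sum_le_sum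
    intro i _
    calc σ i ^ 2 * w i ≤ σ i ^ 2 * 1 := by
          apply mul_le_mul_of_nonneg_left (hw1 i) (sq_nonneg _)
      _ = σ i ^ 2 := by ring
  · push_neg at hkr
    set c : ℝ := σ ⟨k, hkr⟩ ^ 2 with hcdef
    have hc0 : 0 ≤ c := sq_nonneg _
    set S := Finset.univ.filter (fun i : Fin r => (i : ℕ) < k) with hS
    have hSc : S.card = k := card_filter_lt r k (le_of_lt hkr)
    have hbound : ∀ i : Fin r, σ i ^ 2 * w i ≤
        (if (i : ℕ) < k then σ i ^ 2 - c * (1 - w i) else c * w i) := by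
      intro i
      split
      · rename_i hik
        have hci : c ≤ σ i ^ 2 := by
          apply pow_le_pow_left₀ (hσpos _) _ 2
          exact hσdec i ⟨k, hkr⟩ (by simpa [Fin.le_iff_val_le_val] using le_of_lt hik)
        nlinarith [hw0 i, hw1 i]
      · rename_i hik
        push_neg at hik
        have hci : σ i ^ 2 ≤ c := by
          apply pow_le_pow_left₀ (hσpos _) _ 2
          exact hσdec ⟨k, hkr⟩ i (by simpa [Fin.le_iff_val_le_val] using hik)
        nlinarith [hw0 i]
    have ht : ∑ i ∈ S, w i + ∑ i ∈ Sᶜ, w i = ∑ i, w i := Finset.sum_add_sum_compl S w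
    calc (∑ i, σ i ^ 2 * w i)
        ≤ ∑ i : Fin r, (if (i : ℕ) < k then σ i ^ 2 - c * (1 - w i) else c * w i) :=
          Finset.sum_le_sum fun i _ => hbound i
      _ = (∑ i ∈ S, (σ i ^ 2 - c * (1 - w i))) + ∑ i ∈ Sᶜ, c * w i := by
          rw [Finset.sum_ite]
          congr 1
          apply Finset.sum_congr _ fun _ _ => rfl
          rw [hS, Finset.compl_filter]
      _ = (∑ i ∈ S, σ i ^ 2) - c * ((k : ℝ) - ∑ i ∈ S, w i) + c * ∑ i ∈ Sᶜ, w i := by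
          rw [Finset.sum_sub_distrib, ← Finset.mul_sum, Finset.sum_sub_distrib,
            Finset.sum_const, hSc, Finset.mul_sum Sᶜ w c, nsmul_eq_mul]
          ring
      _ ≤ ∑ i ∈ S, σ i ^ 2 := by
          have key : 0 ≤ c * ((k : ℝ) - (∑ i ∈ S, w i + ∑ i ∈ Sᶜ, w i)) :=
            mul_nonneg hc0 (by rw [ht]; linarith)
          nlinarith [key]

lemma row_factorization {n m k : ℕ} (W : Matrix (Fin n) (Fin m) ℝ)
    (hrank : W.rank ≤ k) :
    ∃ (d : ℕ) (_ : d ≤ k) (Q : Fin d → Fin m → ℝ) (T : Fin n → Fin d → ℝ),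
      (∀ j j', ∑ y, Q j y * Q j' y = if j = j' then (1:ℝ) else 0) ∧
      (∀ x y, W x y = ∑ j, T x j * Q j y) := by
  classical
  set E := EuclideanSpace ℝ (Fin m) with hE
  let e : (Fin m → ℝ) ≃ₗ[ℝ] E := (WithLp.linearEquiv 2 ℝ (Fin m → ℝ)).symm
  set K : Submodule ℝ E := Submodule.span ℝ (Set.range (fun x : Fin n => e (W x))) with hK
  have hfin : Module.finrank ℝ K ≤ k := by
    have h1 : Set.range (fun x : Fin n => e (W x)) = e '' Set.range W := by
      exact Set.range_comp (⇑e) W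
    have h2 : K = Submodule.map (e : (Fin m → ℝ) →ₗ[ℝ] E)
        (Submodule.span ℝ (Set.range W)) := by
      rw [hK, h1, Submodule.map_span]
      rfl
    rw [h2, LinearEquiv.finrank_map_eq e (Submodule.span ℝ (Set.range W))]
    rw [Matrix.rank_eq_finrank_span_row W] at hrank
    exact hrank
  set d : ℕ := Module.finrank ℝ K with hd
  have hdk : d ≤ k := hfin
  let b : OrthonormalBasis (Fin d) ℝ K := stdOrthonormalBasis ℝ K
  have hmem : ∀ x, e (W x) ∈ K := fun x => Submodule.subset_span ⟨x, rfl⟩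
  refine ⟨d, hdk, fun j => e.symm ((b j : E)),
    fun x j => (b.repr ⟨e (W x), hmem x⟩ : EuclideanSpace ℝ (Fin d)) j, ?_, ?_⟩
  · intro j j'
    have hb := b.orthonormal
    rw [orthonormal_iff_ite] at hb
    have hinner : (inner ℝ (b j : E) (b j' : E) : ℝ)
        = ∑ y, e.symm ((b j : E)) y * e.symm ((b j' : E)) y := by
      rw [PiLp.inner_apply]
      apply Finset.sum_congr rfl
      intro y _
      rw [RCLike.inner_apply', starRingEnd_apply, star_trivial]
      rfl
    rw [← hinner, ← Submodule.coe_inner, hb j j']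
  · intro x y
    let ev : E →ₗ[ℝ] ℝ :=
      (LinearMap.proj y).comp (WithLp.linearEquiv 2 ℝ (Fin m → ℝ)).toLinearMap
    let evK : K →ₗ[ℝ] ℝ := ev.comp K.subtype
    have h0 : W x y = evK ⟨e (W x), hmem x⟩ := rfl
    rw [h0, ← b.sum_repr ⟨e (W x), hmem x⟩, map_sum]
    apply Finset.sum_congr rfl
    intro j _
    rw [map_smul, smul_eq_mul]
    rfl

lemma combo_inner {r n m : ℕ} (u : Fin r → Fin n → ℝ) (v : Fin r → Fin m → ℝ)
    (hu : ∀ i j : Fin r, ∑ x, u i x * u j x = if i = j then (1:ℝ) else 0)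
    (hv : ∀ i j : Fin r, ∑ x, v i x * v j x = if i = j then (1:ℝ) else 0)
    (s1 s2 : Finset (Fin r)) (c eℓ : Fin r → ℝ) :
    ∑ x, ∑ y, (∑ i ∈ s1, c i * (u i x * v i y)) * (∑ i ∈ s2, eℓ i * (u i x * v i y))
      = ∑ i ∈ s1 ∩ s2, c i * eℓ i := by
  have h1 : ∀ x y, (∑ i ∈ s1, c i * (u i x * v i y)) * (∑ i ∈ s2, eℓ i * (u i x * v i y))
      = ∑ i ∈ s1, ∑ i' ∈ s2, (c i * eℓ i') * ((u i x * u i' x) * (v i y * v i' y)) := by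
    intro x y
    rw [Finset.sum_mul_sum]
    exact Finset.sum_congr rfl fun i _ => Finset.sum_congr rfl fun i' _ => by ring
  simp_rw [h1]
  have h2 : ∀ x, ∑ y, ∑ i ∈ s1, ∑ i' ∈ s2, (c i * eℓ i') * ((u i x * u i' x) * (v i y * v i' y))
      = ∑ i ∈ s1, ∑ i' ∈ s2, (c i * eℓ i') * ((u i x * u i' x) * (∑ y, v i y * v i' y)) := by
    intro x
    rw [Finset.sum_comm]
    refine Finset.sum_congr rfl fun i _ => ?_
    rw [Finset.sum_comm]
    refine Finset.sum_congr rfl fun i' _ => ?_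
    rw [Finset.mul_sum, Finset.mul_sum]
  simp_rw [h2, hv]
  rw [Finset.sum_comm]
  have h3 : ∀ i ∈ s1, (∑ x, ∑ i' ∈ s2, c i * eℓ i' * (u i x * u i' x * if i = i' then (1:ℝ) else 0))
      = if i ∈ s2 then c i * eℓ i else 0 := by
    intro i _
    rw [Finset.sum_comm]
    have h4 : ∀ i' ∈ s2, (∑ x, c i * eℓ i' * (u i x * u i' x * if i = i' then (1:ℝ) else 0))
        = if i = i' then c i * eℓ i' else 0 := by
      intro i' _
      by_cases hii : i = i'
      · subst hii
        simp [← Finset.mul_sum, hu i i]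
      · simp only [if_neg hii, mul_zero, Finset.sum_const_zero]
    rw [Finset.sum_congr rfl h4, Finset.sum_ite_eq s2 i (fun i' => c i * eℓ i')]
  rw [Finset.sum_congr rfl h3, Finset.sum_ite_mem, Finset.sum_congr rfl (fun _ _ => rfl)]

lemma cs_sum {N : ℕ} (f g : Fin N → ℝ) (hf : ∀ i, 0 ≤ f i) (hg : ∀ i, 0 ≤ g i) :
    ∑ i, f i * g i ≤ Real.sqrt (∑ i, f i ^ 2) * Real.sqrt (∑ i, g i ^ 2) := by
  have h := sum_mul_sq_le_sq_mul_sq Finset.univ f g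
  have h0 : 0 ≤ ∑ i, f i * g i := Finset.sum_nonneg fun i _ => mul_nonneg (hf i) (hg i)
  have h1 : ∑ i, f i * g i = Real.sqrt ((∑ i, f i * g i) ^ 2) := (Real.sqrt_sq h0).symm
  rw [h1, ← Real.sqrt_mul (by positivity)]
  exact Real.sqrt_le_sqrt h

lemma cs_abs {N : ℕ} (f g : Fin N → ℝ) :
    |∑ i, f i * g i| ≤ Real.sqrt (∑ i, f i ^ 2) * Real.sqrt (∑ i, g i ^ 2) := by
  rw [← Real.sqrt_sq_eq_abs, ← Real.sqrt_mul (by positivity)]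
  exact Real.sqrt_le_sqrt (sum_mul_sq_le_sq_mul_sq Finset.univ f g)

lemma frobInner_linear {n m : ℕ} (a b : ℝ) (A B G : Matrix (Fin n) (Fin m) ℝ) :
    frobInner (a • A + b • B) G = a * frobInner A G + b * frobInner B G := by
  unfold frobInner
  rw [Finset.mul_sum, Finset.mul_sum, ← Finset.sum_add_distrib]
  refine Finset.sum_congr rfl fun x _ => ?_
  rw [Finset.mul_sum, Finset.mul_sum, ← Finset.sum_add_distrib]
  refine Finset.sum_congr rfl fun y _ => ?_
  simp only [Matrix.add_apply, Matrix.smul_apply, smul_eq_mul]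
  ring

/-- the key lower bound over the base set of the ball. -/
lemma frobInner_lower_bound {n m r k : ℕ} (τ : ℝ) (hτ : 0 < τ)
    (G : Matrix (Fin n) (Fin m) ℝ)
    (u : Fin r → Fin n → ℝ) (v : Fin r → Fin m → ℝ) (σ : Fin r → ℝ)
    (hu : ∀ i j : Fin r, ∑ x, u i x * u j x = if i = j then (1 : ℝ) else 0)
    (hv : ∀ i j : Fin r, ∑ x, v i x * v j x = if i = j then (1 : ℝ) else 0)
    (hσpos : ∀ i, 0 < σ i)
    (hσdec : ∀ i j : Fin r, i ≤ j → σ j ≤ σ i)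
    (hsvd : G = ∑ i, σ i • Matrix.vecMulVec (u i) (v i))
    (W : Matrix (Fin n) (Fin m) ℝ) (hrank : W.rank ≤ k) (hfro : frobNorm W ≤ τ) :
    -(τ * Real.sqrt (∑ i ∈ Finset.univ.filter (fun i : Fin r => (i : ℕ) < k), σ i ^ 2))
      ≤ frobInner W G := by
  classical
  obtain ⟨d, hdk, Q, T, hQ, hWTQ⟩ := row_factorization W hrank
  set t : Fin r → Fin d → ℝ := fun i j => ∑ x, u i x * T x j with hts
  set q : Fin r → Fin d → ℝ := fun i j => ∑ y, Q j y * v i y with hqs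
  set a : Fin r → ℝ := fun i => ∑ j, t i j * q i j with has
  have hGentry : ∀ x y, G x y = ∑ i, σ i * (u i x * v i y) := by
    intro x y
    rw [hsvd]
    rw [Matrix.sum_apply]
    exact Finset.sum_congr rfl fun i _ => by
      rw [Matrix.smul_apply, Matrix.vecMulVec_apply, smul_eq_mul]
  -- Step A : frobInner W G = ∑ i, σ i * a i
  have hA3 : ∀ i : Fin r, ∑ x, ∑ y, W x y * (u i x * v i y) = a i := by
    intro i
    have e1 : ∀ x y, W x y * (u i x * v i y)
        = ∑ j, (u i x * T x j) * (Q j y * v i y) := by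
      intro x y
      rw [hWTQ x y, Finset.sum_mul]
      exact Finset.sum_congr rfl fun j _ => by ring
    simp_rw [e1]
    have e2 : ∀ x, ∑ y, ∑ j, (u i x * T x j) * (Q j y * v i y)
        = ∑ j, (u i x * T x j) * q i j := by
      intro x
      rw [Finset.sum_comm]
      exact Finset.sum_congr rfl fun j _ => by rw [← Finset.mul_sum]
    simp_rw [e2]
    rw [Finset.sum_comm]
    exact Finset.sum_congr rfl fun j _ => by rw [← Finset.sum_mul]
  have hstepA : frobInner W G = ∑ i, σ i * a i := by
    unfold frobInner
    have e1 : ∀ x y, W x y * G x y = ∑ i, σ i * (W x y * (u i x * v i y)) := by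
      intro x y
      rw [hGentry x y, Finset.mul_sum]
      exact Finset.sum_congr rfl fun i _ => by ring
    simp_rw [e1]
    have e2 : ∀ x, ∑ y, ∑ i, σ i * (W x y * (u i x * v i y))
        = ∑ i, σ i * ∑ y, W x y * (u i x * v i y) := by
      intro x
      rw [Finset.sum_comm]
      exact Finset.sum_congr rfl fun i _ => by rw [← Finset.mul_sum]
    simp_rw [e2]
    rw [Finset.sum_comm]
    refine Finset.sum_congr rfl fun i _ => ?_
    rw [← Finset.mul_sum, hA3 i]
  -- Frobenius bound on W
  have hfro2 : ∑ x, ∑ y, W x y ^ 2 ≤ τ ^ 2 := by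
    have h0 : 0 ≤ ∑ x, ∑ y, W x y ^ 2 :=
      Finset.sum_nonneg fun x _ => Finset.sum_nonneg fun y _ => sq_nonneg _
    have := Real.sqrt_le_sqrt (le_of_eq (rfl : (∑ x, ∑ y, W x y ^ 2) = _))
    calc ∑ x, ∑ y, W x y ^ 2 = (frobNorm W) ^ 2 := by
          rw [frobNorm, Real.sq_sqrt h0]
      _ ≤ τ ^ 2 := by
          apply pow_le_pow_left₀ (Real.sqrt_nonneg _) hfro
  -- ∑ t² ≤ τ²
  have hT : ∑ x, ∑ j, T x j ^ 2 = ∑ x, ∑ y, W x y ^ 2 := by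
    refine Finset.sum_congr rfl fun x _ => ?_
    have := sum_sq_combo Q hQ Finset.univ (fun j => T x j)
    rw [← this]
    refine (Finset.sum_congr rfl fun y _ => ?_).symm
    rw [hWTQ x y]
  have ht2 : ∑ i, ∑ j, t i j ^ 2 ≤ τ ^ 2 := by
    have h1 : ∑ i, ∑ j, t i j ^ 2 = ∑ j, ∑ i : Fin r, (∑ x, u i x * T x j) ^ 2 :=
      Finset.sum_comm
    have h2 : ∀ j, ∑ i : Fin r, (∑ x, u i x * T x j) ^ 2 ≤ ∑ x, T x j ^ 2 := fun j =>
      bessel_concrete u hu (fun x => T x j)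
    calc ∑ i, ∑ j, t i j ^ 2 = ∑ j, ∑ i : Fin r, (∑ x, u i x * T x j) ^ 2 := h1
      _ ≤ ∑ j, ∑ x, T x j ^ 2 := Finset.sum_le_sum fun j _ => h2 j
      _ = ∑ x, ∑ j, T x j ^ 2 := Finset.sum_comm
      _ = ∑ x, ∑ y, W x y ^ 2 := hT
      _ ≤ τ ^ 2 := hfro2
  -- β bounds
  have hβ1 : ∀ i, ∑ j, q i j ^ 2 ≤ 1 := by
    intro i
    have := bessel_concrete Q hQ (v i)
    calc ∑ j, q i j ^ 2 ≤ ∑ y, v i y ^ 2 := this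
      _ = ∑ y, v i y * v i y := Finset.sum_congr rfl fun y _ => sq (v i y) ▸ by ring
      _ = 1 := by rw [hv i i, if_pos rfl]
  have hβ0 : ∀ i, 0 ≤ ∑ j, q i j ^ 2 := fun i =>
    Finset.sum_nonneg fun j _ => sq_nonneg _
  have hβk : ∑ i, ∑ j, q i j ^ 2 ≤ (k : ℝ) := by
    have h1 : ∑ i, ∑ j, q i j ^ 2 = ∑ j, ∑ i : Fin r, (∑ y, v i y * Q j y) ^ 2 := by
      rw [Finset.sum_comm]
      refine Finset.sum_congr rfl fun j _ => Finset.sum_congr rfl fun i _ => ?_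
      congr 1
      exact Finset.sum_congr rfl fun y _ => by rw [mul_comm]
    have h2 : ∀ j, ∑ i : Fin r, (∑ y, v i y * Q j y) ^ 2 ≤ 1 := by
      intro j
      have := bessel_concrete v hv (Q j)
      calc ∑ i : Fin r, (∑ y, v i y * Q j y) ^ 2 ≤ ∑ y, Q j y ^ 2 := this
        _ = ∑ y, Q j y * Q j y := Finset.sum_congr rfl fun y _ => by ring
        _ = 1 := by rw [hQ j j, if_pos rfl]
    calc ∑ i, ∑ j, q i j ^ 2 = ∑ j, ∑ i : Fin r, (∑ y, v i y * Q j y) ^ 2 := h1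
      _ ≤ ∑ _j : Fin d, (1 : ℝ) := Finset.sum_le_sum fun j _ => h2 j
      _ = (d : ℝ) := by simp
      _ ≤ (k : ℝ) := by exact_mod_cast hdk
  have hweight : ∑ i, σ i ^ 2 * (∑ j, q i j ^ 2)
      ≤ ∑ i ∈ Finset.univ.filter (fun i : Fin r => (i : ℕ) < k), σ i ^ 2 :=
    weight_bound σ (fun i => (hσpos i).le) hσdec (fun i => ∑ j, q i j ^ 2)
      hβ0 hβ1 hβk
  -- final chain
  have hai : ∀ i, |a i| ≤ Real.sqrt (∑ j, t i j ^ 2) * Real.sqrt (∑ j, q i j ^ 2) :=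
    fun i => cs_abs (t i) (q i)
  have hchain : ∑ i, σ i * |a i| ≤
      τ * Real.sqrt (∑ i ∈ Finset.univ.filter (fun i : Fin r => (i : ℕ) < k), σ i ^ 2) := by
    have step1 : ∑ i, σ i * |a i|
        ≤ ∑ i, Real.sqrt (∑ j, t i j ^ 2) * (σ i * Real.sqrt (∑ j, q i j ^ 2)) := by
      apply Finset.sum_le_sum
      intro i _
      have := mul_le_mul_of_nonneg_left (hai i) (hσpos i).le
      calc σ i * |a i| ≤ σ i * (Real.sqrt (∑ j, t i j ^ 2) * Real.sqrt (∑ j, q i j ^ 2)) := this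
        _ = Real.sqrt (∑ j, t i j ^ 2) * (σ i * Real.sqrt (∑ j, q i j ^ 2)) := by ring
    have step2 : ∑ i, Real.sqrt (∑ j, t i j ^ 2) * (σ i * Real.sqrt (∑ j, q i j ^ 2))
        ≤ Real.sqrt (∑ i, Real.sqrt (∑ j, t i j ^ 2) ^ 2)
          * Real.sqrt (∑ i, (σ i * Real.sqrt (∑ j, q i j ^ 2)) ^ 2) :=
      cs_sum _ _ (fun i => Real.sqrt_nonneg _)
        (fun i => mul_nonneg (hσpos i).le (Real.sqrt_nonneg _))
    have e3 : ∑ i, Real.sqrt (∑ j, t i j ^ 2) ^ 2 = ∑ i, ∑ j, t i j ^ 2 :=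
      Finset.sum_congr rfl fun i _ => Real.sq_sqrt
        (Finset.sum_nonneg fun j _ => sq_nonneg _)
    have e4 : ∑ i, (σ i * Real.sqrt (∑ j, q i j ^ 2)) ^ 2 = ∑ i, σ i ^ 2 * (∑ j, q i j ^ 2) := by
      refine Finset.sum_congr rfl fun i _ => ?_
      rw [mul_pow, Real.sq_sqrt (hβ0 i)]
    have b1 : Real.sqrt (∑ i, Real.sqrt (∑ j, t i j ^ 2) ^ 2) ≤ τ := by
      rw [e3]
      calc Real.sqrt (∑ i, ∑ j, t i j ^ 2) ≤ Real.sqrt (τ ^ 2) := Real.sqrt_le_sqrt ht2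
        _ = τ := Real.sqrt_sq hτ.le
    have b2 : Real.sqrt (∑ i, (σ i * Real.sqrt (∑ j, q i j ^ 2)) ^ 2)
        ≤ Real.sqrt (∑ i ∈ Finset.univ.filter (fun i : Fin r => (i : ℕ) < k), σ i ^ 2) := by
      rw [e4]
      exact Real.sqrt_le_sqrt hweight
    calc ∑ i, σ i * |a i|
        ≤ ∑ i, Real.sqrt (∑ j, t i j ^ 2) * (σ i * Real.sqrt (∑ j, q i j ^ 2)) := step1
      _ ≤ Real.sqrt (∑ i, Real.sqrt (∑ j, t i j ^ 2) ^ 2)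
          * Real.sqrt (∑ i, (σ i * Real.sqrt (∑ j, q i j ^ 2)) ^ 2) := step2
      _ ≤ τ * Real.sqrt (∑ i ∈ Finset.univ.filter (fun i : Fin r => (i : ℕ) < k), σ i ^ 2) := by
          apply mul_le_mul b1 b2 (Real.sqrt_nonneg _) hτ.le
  have hlow : -(∑ i, σ i * a i) ≤ ∑ i, σ i * |a i| := by
    rw [← Finset.sum_neg_distrib]
    apply Finset.sum_le_sum
    intro i _
    have : -(σ i * a i) = σ i * (-a i) := by ring
    rw [this]
    exact mul_le_mul_of_nonneg_left (neg_le_abs _) (hσpos i).le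
  rw [hstepA]
  linarith

/-- the LMO solution over the spectral-k-support norm ball. The
nonzero matrix G is given by its singular value decomposition
G = ∑ i, σ i • u i (v i)ᵀ with orthonormal left/right singular vectors and
decreasing positive singular values; with s = min k r, the suitably rescaled
negative truncated s-SVD of G minimizes the Frobenius inner product with G over
the ball, with value −τ√(σ₁² + … + σ_s²). -/
theorem spectralKSupport_lmo (n m r k : ℕ) (hk : 1 ≤ k)
    (τ : ℝ) (hτ : 0 < τ)
    (G : Matrix (Fin n) (Fin m) ℝ) (hG : G ≠ 0)
    (u : Fin r → Fin n → ℝ) (v : Fin r → Fin m → ℝ) (σ : Fin r → ℝ)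
    (hu : ∀ i j : Fin r, ∑ x, u i x * u j x = if i = j then (1 : ℝ) else 0)
    (hv : ∀ i j : Fin r, ∑ x, v i x * v j x = if i = j then (1 : ℝ) else 0)
    (hσpos : ∀ i, 0 < σ i)
    (hσdec : ∀ i j : Fin r, i ≤ j → σ j ≤ σ i)
    (hsvd : G = ∑ i, σ i • Matrix.vecMulVec (u i) (v i))
    (s : ℕ) (hs : s = min k r)
    (Wstar : Matrix (Fin n) (Fin m) ℝ)
    (hWstar : Wstar =
      (-(τ / Real.sqrt (∑ i ∈ Finset.univ.filter (fun i : Fin r => (i : ℕ) < s), σ i ^ 2))) •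
        ∑ i ∈ Finset.univ.filter (fun i : Fin r => (i : ℕ) < s),
          σ i • Matrix.vecMulVec (u i) (v i)) :
    Wstar ∈ spectralKSupportBall n m k τ ∧
    (∀ W ∈ spectralKSupportBall n m k τ, frobInner Wstar G ≤ frobInner W G) ∧
    frobInner Wstar G =
      -(τ * Real.sqrt (∑ i ∈ Finset.univ.filter (fun i : Fin r => (i : ℕ) < s), σ i ^ 2)) := by
  classical
  -- basic facts
  have hr0 : 0 < r := by
    rcases Nat.eq_zero_or_pos r with h0 | h0
    · exfalso
      apply hG
      subst h0
      rw [hsvd]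
      exact Finset.sum_empty
    · exact h0
  have hsr : s ≤ r := hs ▸ min_le_right k r
  have hsk : s ≤ k := hs ▸ min_le_left k r
  have hs1 : 1 ≤ s := by rw [hs]; exact le_min hk hr0
  set S := Finset.univ.filter (fun i : Fin r => (i : ℕ) < s) with hSdef
  set Sig := ∑ i ∈ S, σ i ^ 2 with hSigdef
  have hSk : S = Finset.univ.filter (fun i : Fin r => (i : ℕ) < k) := by
    apply Finset.filter_congr
    intro i _
    constructor
    · intro h; exact lt_of_lt_of_le h hsk
    · intro h; rw [hs]; exact lt_min h i.2
  have hSne : S.Nonempty := ⟨⟨0, hr0⟩, Finset.mem_filter.mpr ⟨Finset.mem_univ _, hs1⟩⟩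
  have hSigpos : 0 < Sig :=
    Finset.sum_pos (fun i _ => pow_pos (hσpos i) 2) hSne
  have hsqrtpos : 0 < Real.sqrt Sig := Real.sqrt_pos.mpr hSigpos
  set c : ℝ := -(τ / Real.sqrt Sig) with hcdef
  -- entry formulas
  have hWentry : ∀ x y, Wstar x y = ∑ i ∈ S, (c * σ i) * (u i x * v i y) := by
    intro x y
    rw [hWstar]
    rw [Matrix.smul_apply, Matrix.sum_apply, smul_eq_mul, Finset.mul_sum]
    refine Finset.sum_congr rfl fun i _ => ?_
    simp only [Matrix.smul_apply, Matrix.vecMulVec_apply, smul_eq_mul]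
    ring
  have hGentry : ∀ x y, G x y = ∑ i ∈ Finset.univ, σ i * (u i x * v i y) := by
    intro x y
    rw [hsvd, Matrix.sum_apply]
    exact Finset.sum_congr rfl fun i _ => by
      rw [Matrix.smul_apply, Matrix.vecMulVec_apply, smul_eq_mul]
  -- value of frobInner Wstar G
  have hval : frobInner Wstar G = -(τ * Real.sqrt Sig) := by
    have : frobInner Wstar G = ∑ i ∈ S ∩ Finset.univ, (c * σ i) * σ i := by
      unfold frobInner
      rw [← combo_inner u v hu hv S Finset.univ (fun i => c * σ i) σ]
      exact Finset.sum_congr rfl fun x _ => Finset.sum_congr rfl fun y _ => by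
        rw [hWentry x y, hGentry x y]
    rw [this, Finset.inter_univ]
    have e1 : ∑ i ∈ S, (c * σ i) * σ i = c * Sig := by
      rw [hSigdef, Finset.mul_sum]
      exact Finset.sum_congr rfl fun i _ => by ring
    rw [e1, hcdef]
    field_simp
    rw [Real.sq_sqrt hSigpos.le]
  -- frobNorm Wstar = τ
  have hnorm : frobNorm Wstar = τ := by
    have h2 : ∑ x, ∑ y, Wstar x y ^ 2 = ∑ i ∈ S, (c * σ i) ^ 2 := by
      have := combo_inner u v hu hv S S (fun i => c * σ i) (fun i => c * σ i)
      rw [Finset.inter_self] at this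
      calc ∑ x, ∑ y, Wstar x y ^ 2
          = ∑ x, ∑ y, (∑ i ∈ S, (c * σ i) * (u i x * v i y))
            * (∑ i ∈ S, (c * σ i) * (u i x * v i y)) := by
            refine Finset.sum_congr rfl fun x _ => Finset.sum_congr rfl fun y _ => ?_
            rw [hWentry x y]; ring
        _ = ∑ i ∈ S, (c * σ i) * (c * σ i) := this
        _ = ∑ i ∈ S, (c * σ i) ^ 2 := Finset.sum_congr rfl fun i _ => by ring
    have h3 : ∑ i ∈ S, (c * σ i) ^ 2 = τ ^ 2 := by
      have e1 : ∑ i ∈ S, (c * σ i) ^ 2 = c ^ 2 * Sig := by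
        rw [hSigdef, Finset.mul_sum]
        exact Finset.sum_congr rfl fun i _ => by ring
      rw [e1, hcdef]
      rw [neg_sq, div_pow, Real.sq_sqrt hSigpos.le]
      field_simp
    rw [frobNorm, h2, h3, Real.sqrt_sq hτ.le]
  -- rank Wstar ≤ k
  have hrank : Wstar.rank ≤ k := by
    set emb : Fin s → Fin r := fun l => ⟨(l : ℕ), lt_of_lt_of_le l.2 hsr⟩ with hemb
    set A : Matrix (Fin n) (Fin s) ℝ := fun x l => (c * σ (emb l)) * u (emb l) x with hA
    set B : Matrix (Fin s) (Fin m) ℝ := fun l y => v (emb l) y with hB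
    have hWAB : Wstar = A * B := by
      ext x y
      rw [hWentry x y, Matrix.mul_apply]
      refine Finset.sum_bij' (fun (i : Fin r) (hi : i ∈ S) =>
          (⟨(i : ℕ), (Finset.mem_filter.mp hi).2⟩ : Fin s))
        (fun (l : Fin s) _ => emb l) ?_ ?_ ?_ ?_ ?_
      · intro i hi; exact Finset.mem_univ _
      · intro l _
        refine Finset.mem_filter.mpr ⟨Finset.mem_univ _, ?_⟩
        exact l.2
      · intro i hi; rfl
      · intro l _; rfl
      · intro i hi
        rw [hA, hB]
        ring
    rw [hWAB]
    calc (A * B).rank ≤ min A.rank B.rank := Matrix.rank_mul_le A B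
      _ ≤ A.rank := min_le_left _ _
      _ ≤ Fintype.card (Fin s) := Matrix.rank_le_card_width A
      _ = s := Fintype.card_fin s
      _ ≤ k := hsk
  -- membership
  have hmem : Wstar ∈ spectralKSupportBall n m k τ :=
    subset_convexHull ℝ _ ⟨hrank, le_of_eq hnorm⟩
  refine ⟨hmem, ?_, hval⟩
  -- minimality
  intro W hW
  have hsub : spectralKSupportBall n m k τ
      ⊆ {W : Matrix (Fin n) (Fin m) ℝ | -(τ * Real.sqrt Sig) ≤ frobInner W G} := by
    apply convexHull_min
    · intro W0 hW0
      have := frobInner_lower_bound τ hτ G u v σ hu hv hσpos hσdec hsvd W0 hW0.1 hW0.2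
      show -(τ * Real.sqrt Sig) ≤ frobInner W0 G
      rw [hSigdef, hSk]
      exact this
    · intro W1 h1 W2 h2 a b ha hb hab
      have : frobInner (a • W1 + b • W2) G = a * frobInner W1 G + b * frobInner W2 G :=
        frobInner_linear a b W1 W2 G
      simp only [Set.mem_setOf_eq] at h1 h2 ⊢
      rw [this]
      have e0 : -(τ * Real.sqrt Sig)
          = a * (-(τ * Real.sqrt Sig)) + b * (-(τ * Real.sqrt Sig)) := by
        rw [← add_mul, hab, one_mul]
      rw [e0]
      exact add_le_add (mul_le_mul_of_nonneg_left h1 ha) (mul_le_mul_of_nonneg_left h2 hb)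
  have := hsub hW
  rw [hval]
  exact this
end

section
/- Let n ≥ 1, 1 ≤ k ≤ n and τ > 0. The k-sparse polytope P_k(τ), defined as the convex hull of all vectors v ∈ {0, τ, −τ}ⁿ with at most k nonzero entries, equals the set {x ∈ ℝⁿ : max(‖x‖_∞, ‖x‖₁/k) ≤ τ}; that is, P_k(τ) is the ball of radius τ with respect to the norm x ↦ max{‖x‖_∞, ‖x‖₁/k}. -/
open Finset

lemma sum_abs_update {ι : Type*} [Fintype ι] [DecidableEq ι] (z : ι → ℝ) (i : ι) (c : ℝ) :
    ∑ j, |Function.update z i c j| = (∑ j, |z j|) - |z i| + |c| := by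
  rw [← Finset.sum_erase_add _ _ (Finset.mem_univ i),
      ← Finset.sum_erase_add _ (fun j => |z j|) (Finset.mem_univ i)]
  have h : ∑ j ∈ Finset.univ.erase i, |Function.update z i c j|
      = ∑ j ∈ Finset.univ.erase i, |z j| :=
    Finset.sum_congr rfl fun j hj => by
      rw [Function.update_of_ne (Finset.ne_of_mem_erase hj)]
  rw [h, Function.update_self]; ring

lemma signed (l : ℝ) : ∃ ε : ℝ, |ε| = 1 ∧ l = ε * |l| := by
  rcases le_or_gt 0 l with h | h
  · exact ⟨1, by simp, by rw [abs_of_nonneg h]; ring⟩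
  · exact ⟨-1, by simp, by rw [abs_of_neg h]; ring⟩

lemma vert_sum {ι : Type*} [Fintype ι] [DecidableEq ι] {τ : ℝ} {v : ι → ℝ}
    (hv : ∀ i, v i = 0 ∨ |v i| = τ) :
    ∑ i, |v i| = (Finset.univ.filter fun i => v i ≠ 0).card * τ := by
  have h : ∀ i ∈ Finset.univ, |v i| = if v i ≠ 0 then τ else 0 := by
    intro i _
    by_cases h0 : v i = 0
    · simp [h0]
    · simp only [ne_eq, h0, not_false_eq_true, if_true]
      rcases hv i with h | h
      · exact (h0 h).elim
      · exact h
  rw [Finset.sum_congr rfl h, ← Finset.sum_filter, Finset.sum_const, nsmul_eq_mul]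

lemma ncard_ne_zero {ι : Type*} [Fintype ι] [DecidableEq ι] (v : ι → ℝ) :
    {i | v i ≠ 0}.ncard = (Finset.univ.filter fun i => v i ≠ 0).card := by
  rw [Set.ncard_eq_toFinset_card']
  congr 1
  ext i
  simp

lemma vert_sum' {ι : Type*} [DecidableEq ι] {τ : ℝ} {v : ι → ℝ} (s : Finset ι)
    (hv : ∀ i ∈ s, v i = 0 ∨ |v i| = τ) :
    ∑ i ∈ s, |v i| = (s.filter fun i => v i ≠ 0).card * τ := by
  have h : ∀ i ∈ s, |v i| = if v i ≠ 0 then τ else 0 := by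
    intro i hi
    by_cases h0 : v i = 0
    · simp [h0]
    · simp only [ne_eq, h0, not_false_eq_true, if_true]
      rcases hv i hi with h | h
      · exact (h0 h).elim
      · exact h
  rw [Finset.sum_congr rfl h, ← Finset.sum_filter, Finset.sum_const, nsmul_eq_mul]

lemma key {ι : Type*} [Fintype ι] [DecidableEq ι] (k : ℕ) (τ : ℝ) (hτ : 0 < τ) :
    ∀ N : ℕ, ∀ x : ι → ℝ,
      (Finset.univ.filter (fun i => x i ≠ 0 ∧ |x i| ≠ τ)).card * 2
        + (if (∑ i, |x i|) = k * τ then 0 else 1) ≤ N →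
      (∀ i, |x i| ≤ τ) → (∑ i, |x i|) ≤ k * τ →
      x ∈ convexHull ℝ {v : ι → ℝ |
        (∀ i, v i = 0 ∨ v i = τ ∨ v i = -τ) ∧ {i | v i ≠ 0}.ncard ≤ k} := by
  intro N
  induction N using Nat.strong_induction_on with
  | _ N ih =>
  intro x hm hinf h1
  set F := Finset.univ.filter (fun i => x i ≠ 0 ∧ |x i| ≠ τ) with hFdef
  by_cases hF0 : F = ∅
  · -- base case: x is itself a vertex
    have hcoord : ∀ i, x i = 0 ∨ |x i| = τ := by
      intro i
      by_contra h
      push_neg at h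
      have : i ∈ F := by simp [hFdef, h.1, h.2]
      simp [hF0] at this
    apply subset_convexHull
    refine ⟨fun i => ?_, ?_⟩
    · rcases hcoord i with h | h
      · exact Or.inl h
      · rcases (abs_eq hτ.le).mp h with h | h
        · exact Or.inr (Or.inl h)
        · exact Or.inr (Or.inr h)
    · rw [ncard_ne_zero]
      have hsum := vert_sum hcoord
      rw [hsum] at h1
      have : ((Finset.univ.filter fun i => x i ≠ 0).card : ℝ) ≤ k :=
        le_of_mul_le_mul_right (by linarith [h1]) hτ
      exact_mod_cast this
  · -- inductive step
    obtain ⟨i, hiF⟩ := Finset.nonempty_of_ne_empty hF0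
    have hix : x i ≠ 0 ∧ |x i| ≠ τ := by
      have := hiF; rw [hFdef] at this; simpa using this
    have ha0 : 0 < |x i| := abs_pos.mpr hix.1
    have haτ : |x i| < τ := lt_of_le_of_ne (hinf i) hix.2
    obtain ⟨ε, hε1, hεx⟩ := signed (x i)
    have habs : ∀ t : ℝ, 0 ≤ t → |ε * t| = t := fun t ht => by
      rw [abs_mul, hε1, one_mul, abs_of_nonneg ht]
    set a := |x i| with hadef
    have hcard_pos : 0 < F.card := Finset.card_pos.mpr ⟨i, hiF⟩
    -- generic facts about single updates
    have hbnd : ∀ c : ℝ, |c| ≤ τ → ∀ l, |Function.update x i c l| ≤ τ := by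
      intro c hc l
      rcases eq_or_ne l i with rfl | h
      · rw [Function.update_self]; exact hc
      · rw [Function.update_of_ne h]; exact hinf l
    have hsub : ∀ c : ℝ, (c = 0 ∨ |c| = τ) →
        (Finset.univ.filter fun l =>
            Function.update x i c l ≠ 0 ∧ |Function.update x i c l| ≠ τ)
          ⊆ F.erase i := by
      intro c hc l hl
      simp only [Finset.mem_filter, Finset.mem_univ, true_and] at hl
      rcases eq_or_ne l i with rfl | h
      · rw [Function.update_self] at hl
        rcases hc with h0 | h0
        · exact absurd h0 hl.1
        · exact absurd h0 hl.2
      · rw [Function.update_of_ne h] at hl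
        refine Finset.mem_erase.mpr ⟨h, ?_⟩
        rw [hFdef]; simp [hl.1, hl.2]
    have hsubF : ∀ c : ℝ,
        (Finset.univ.filter fun l =>
            Function.update x i c l ≠ 0 ∧ |Function.update x i c l| ≠ τ)
          ⊆ F := by
      intro c l hl
      simp only [Finset.mem_filter, Finset.mem_univ, true_and] at hl
      rcases eq_or_ne l i with rfl | h
      · exact hiF
      · rw [Function.update_of_ne h] at hl
        rw [hFdef]; simp [hl.1, hl.2]
    by_cases hT : (∑ l, |x l|) = (k : ℝ) * τ
    · -- Case B : tight
      have hmx : F.card * 2 ≤ N := by rw [if_pos hT] at hm; omega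
      -- there is a second fractional coordinate
      have hEx : (F.erase i).Nonempty := by
        by_contra hne
        rw [Finset.not_nonempty_iff_eq_empty] at hne
        have hco : ∀ l ∈ Finset.univ.erase i, x l = 0 ∨ |x l| = τ := by
          intro l hl
          have hl' := Finset.ne_of_mem_erase hl
          by_contra h
          push_neg at h
          have : l ∈ F.erase i :=
            Finset.mem_erase.mpr ⟨hl', by rw [hFdef]; simp [h.1, h.2]⟩
          simp [hne] at this
        have hsplit : (∑ l, |x l|) = (∑ l ∈ Finset.univ.erase i, |x l|) + a := by
          rw [hadef]
          exact (Finset.sum_erase_add _ _ (Finset.mem_univ i)).symm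
        have hrest := vert_sum' (Finset.univ.erase i) hco
        set m := ((Finset.univ.erase i).filter fun l => x l ≠ 0).card with hmdef
        have ha_eq : a = (k:ℝ) * τ - m * τ := by
          rw [hrest] at hsplit
          rw [hT] at hsplit
          linarith
        have h1m : (m:ℝ) * τ < k * τ := by linarith
        have h2m : (k:ℝ) * τ < (m + 1) * τ := by linarith
        have hm1 : m < k := by
          have := (mul_lt_mul_iff_of_pos_right hτ).mp h1m
          exact_mod_cast this
        have hm2 : (k:ℕ) < m + 1 := by
          have := (mul_lt_mul_iff_of_pos_right hτ).mp h2m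
          exact_mod_cast this
        omega
      obtain ⟨j, hjmem⟩ := hEx
      have hji : j ≠ i := Finset.ne_of_mem_erase hjmem
      have hjF : j ∈ F := Finset.mem_of_mem_erase hjmem
      have hjx : x j ≠ 0 ∧ |x j| ≠ τ := by
        have := hjF; rw [hFdef] at this; simpa using this
      obtain ⟨δ, hδ1, hδx⟩ := signed (x j)
      have habsδ : ∀ t : ℝ, 0 ≤ t → |δ * t| = t := fun t ht => by
        rw [abs_mul, hδ1, one_mul, abs_of_nonneg ht]
      set b := |x j| with hbdef
      have hb0 : 0 < b := abs_pos.mpr hjx.1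
      have hbτ : b < τ := lt_of_le_of_ne (hinf j) hjx.2
      -- helpers for double updates
      have happ : ∀ (ci cj : ℝ) (l : ι), l ≠ i → l ≠ j →
          Function.update (Function.update x i ci) j cj l = x l := by
        intro ci cj l hli hlj
        rw [Function.update_of_ne hlj, Function.update_of_ne hli]
      have happi : ∀ ci cj : ℝ,
          Function.update (Function.update x i ci) j cj i = ci := by
        intro ci cj
        rw [Function.update_of_ne hji.symm, Function.update_self]
      have happj : ∀ ci cj : ℝ,
          Function.update (Function.update x i ci) j cj j = cj := by
        intro ci cj
        rw [Function.update_self]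
      have hbnd2 : ∀ ci cj : ℝ, |ci| ≤ τ → |cj| ≤ τ → ∀ l,
          |Function.update (Function.update x i ci) j cj l| ≤ τ := by
        intro ci cj h1' h2' l
        rcases eq_or_ne l j with rfl | hlj
        · rw [happj]; exact h2'
        rcases eq_or_ne l i with rfl | hli
        · rw [happi]; exact h1'
        · rw [happ ci cj l hli hlj]; exact hinf l
      have hsum2 : ∀ ci cj : ℝ,
          (∑ l, |Function.update (Function.update x i ci) j cj l|)
            = (∑ l, |x l|) - a - b + |ci| + |cj| := by
        intro ci cj
        rw [sum_abs_update, sum_abs_update, Function.update_of_ne hji,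
          hadef, hbdef]
        ring
      have hsubG : ∀ (ci cj : ℝ) (w : ι), w ∈ F →
          (Function.update (Function.update x i ci) j cj w = 0 ∨
            |Function.update (Function.update x i ci) j cj w| = τ) →
          (Finset.univ.filter fun l =>
              Function.update (Function.update x i ci) j cj l ≠ 0 ∧
                |Function.update (Function.update x i ci) j cj l| ≠ τ)
            ⊆ F.erase w := by
        intro ci cj w hw hwv l hl
        simp only [Finset.mem_filter, Finset.mem_univ, true_and] at hl
        have hlw : l ≠ w := by
          rintro rfl
          rcases hwv with h | h
          · exact hl.1 h
          · exact hl.2 h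
        refine Finset.mem_erase.mpr ⟨hlw, ?_⟩
        rcases eq_or_ne l i with rfl | hli
        · exact hiF
        rcases eq_or_ne l j with rfl | hlj
        · exact hjF
        · rw [happ ci cj l hli hlj] at hl
          rw [hFdef]; simp [hl.1, hl.2]
      -- the two transfer amounts
      obtain ⟨sP, hsPpos, hsP1, hsP2, hsPcase⟩ :
          ∃ s : ℝ, 0 < s ∧ s ≤ τ - a ∧ s ≤ b ∧ (s = τ - a ∨ s = b) :=
        ⟨min (τ - a) b, lt_min (by linarith) hb0, min_le_left _ _,
          min_le_right _ _, by
            rcases min_cases (τ - a) b with ⟨h, _⟩ | ⟨h, _⟩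
            · exact Or.inl h
            · exact Or.inr h⟩
      obtain ⟨sM, hsMpos, hsM1, hsM2, hsMcase⟩ :
          ∃ s : ℝ, 0 < s ∧ s ≤ a ∧ s ≤ τ - b ∧ (s = a ∨ s = τ - b) :=
        ⟨min a (τ - b), lt_min ha0 (by linarith), min_le_left _ _,
          min_le_right _ _, by
            rcases min_cases a (τ - b) with ⟨h, _⟩ | ⟨h, _⟩
            · exact Or.inl h
            · exact Or.inr h⟩
      -- generic membership for tight double updates
      have hmem2 : ∀ ci cj : ℝ, |ci| ≤ τ → |cj| ≤ τ →
          (∑ l, |Function.update (Function.update x i ci) j cj l|) = (k:ℝ) * τ →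
          (Finset.univ.filter fun l =>
              Function.update (Function.update x i ci) j cj l ≠ 0 ∧
                |Function.update (Function.update x i ci) j cj l| ≠ τ).card
            ≤ F.card - 1 →
          Function.update (Function.update x i ci) j cj ∈ convexHull ℝ
            {v : ι → ℝ | (∀ i, v i = 0 ∨ v i = τ ∨ v i = -τ) ∧
              {i | v i ≠ 0}.ncard ≤ k} := by
        intro ci cj h1' h2' h3' h4'
        refine ih (N - 1) (by omega) _ ?_ (hbnd2 ci cj h1' h2') (le_of_eq h3')
        rw [if_pos h3']
        omega
      -- the P endpoint
      have hyPmem : Function.update (Function.update x i (ε * (a + sP))) j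
          (δ * (b - sP)) ∈ convexHull ℝ
            {v : ι → ℝ | (∀ i, v i = 0 ∨ v i = τ ∨ v i = -τ) ∧
              {i | v i ≠ 0}.ncard ≤ k} := by
        have habsi : |ε * (a + sP)| = a + sP := habs _ (by linarith)
        have habsj : |δ * (b - sP)| = b - sP := habsδ _ (by linarith)
        refine hmem2 _ _ (by rw [habsi]; linarith) (by rw [habsj]; linarith)
          (by rw [hsum2, habsi, habsj, hT]; ring) ?_
        have hw : ∃ w ∈ F,
            (Function.update (Function.update x i (ε * (a + sP))) j
                (δ * (b - sP)) w = 0 ∨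
              |Function.update (Function.update x i (ε * (a + sP))) j
                (δ * (b - sP)) w| = τ) := by
          rcases hsPcase with hc | hc
          · exact ⟨i, hiF, Or.inr (by rw [happi, habs _ (by linarith)]; rw [hc]; ring)⟩
          · exact ⟨j, hjF, Or.inl (by rw [happj, hc]; ring)⟩
        obtain ⟨w, hwF, hwv⟩ := hw
        have hc := Finset.card_le_card (hsubG _ _ w hwF hwv)
        rw [Finset.card_erase_of_mem hwF] at hc
        exact hc
      -- the M endpoint
      have hyMmem : Function.update (Function.update x i (ε * (a - sM))) j
          (δ * (b + sM)) ∈ convexHull ℝ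
            {v : ι → ℝ | (∀ i, v i = 0 ∨ v i = τ ∨ v i = -τ) ∧
              {i | v i ≠ 0}.ncard ≤ k} := by
        have habsi : |ε * (a - sM)| = a - sM := habs _ (by linarith)
        have habsj : |δ * (b + sM)| = b + sM := habsδ _ (by linarith)
        refine hmem2 _ _ (by rw [habsi]; linarith) (by rw [habsj]; linarith)
          (by rw [hsum2, habsi, habsj, hT]; ring) ?_
        have hw : ∃ w ∈ F,
            (Function.update (Function.update x i (ε * (a - sM))) j
                (δ * (b + sM)) w = 0 ∨
              |Function.update (Function.update x i (ε * (a - sM))) j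
                (δ * (b + sM)) w| = τ) := by
          rcases hsMcase with hc | hc
          · exact ⟨i, hiF, Or.inl (by rw [happi, hc]; ring)⟩
          · exact ⟨j, hjF, Or.inr (by rw [happj, habsδ _ (by linarith)]; rw [hc]; ring)⟩
        obtain ⟨w, hwF, hwv⟩ := hw
        have hc := Finset.card_le_card (hsubG _ _ w hwF hwv)
        rw [Finset.card_erase_of_mem hwF] at hc
        exact hc
      -- convex combination
      have hne : sP + sM ≠ 0 := by positivity
      have hxeq : x = (sM / (sP + sM)) • Function.update
            (Function.update x i (ε * (a + sP))) j (δ * (b - sP))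
          + (sP / (sP + sM)) • Function.update
            (Function.update x i (ε * (a - sM))) j (δ * (b + sM)) := by
        funext l
        simp only [Pi.add_apply, Pi.smul_apply, smul_eq_mul]
        rcases eq_or_ne l j with rfl | hlj
        · rw [happj, happj, hδx]
          field_simp
          ring
        rcases eq_or_ne l i with rfl | hli
        · rw [happi, happi, hεx]
          field_simp
          ring
        · rw [happ _ _ l hli hlj, happ _ _ l hli hlj]
          field_simp
          ring
      rw [hxeq]
      exact (convex_convexHull ℝ _) hyPmem hyMmem
        (div_nonneg hsMpos.le (by linarith)) (div_nonneg hsPpos.le (by linarith))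
        (by field_simp; ring)
    · -- Case A : slack
      have hlt : (∑ l, |x l|) < k * τ := lt_of_le_of_ne h1 hT
      have hmx : F.card * 2 + 1 ≤ N := by rw [if_neg hT] at hm; exact hm
      obtain ⟨t2, ht2a, ht2τ, ht2ub, ht2cases⟩ :
          ∃ t : ℝ, a < t ∧ t ≤ τ ∧ t ≤ k * τ - (∑ l, |x l|) + a ∧
            (t = τ ∨ t = k * τ - (∑ l, |x l|) + a) :=
        ⟨min τ (k * τ - (∑ l, |x l|) + a), lt_min haτ (by linarith),
          min_le_left _ _, min_le_right _ _, by
            rcases min_cases τ (k * τ - (∑ l, |x l|) + a) with ⟨h, _⟩ | ⟨h, _⟩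
            · exact Or.inl h
            · exact Or.inr h⟩
      have ht2pos : 0 < t2 := ha0.trans ht2a
      have hs0 : (∑ l, |Function.update x i (0:ℝ) l|) = (∑ l, |x l|) - a := by
        rw [sum_abs_update, hadef]; simp
      have hs2 : (∑ l, |Function.update x i (ε * t2) l|)
          = (∑ l, |x l|) - a + t2 := by
        rw [sum_abs_update, habs t2 ht2pos.le, hadef]
      have hy0mem : Function.update x i (0:ℝ) ∈ convexHull ℝ {v : ι → ℝ |
          (∀ i, v i = 0 ∨ v i = τ ∨ v i = -τ) ∧ {i | v i ≠ 0}.ncard ≤ k} := by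
        have hc := Finset.card_le_card (hsub 0 (Or.inl rfl))
        rw [Finset.card_erase_of_mem hiF] at hc
        refine ih (N - 1) (by omega) _ ?_ (hbnd 0 (by simp [hτ.le]))
          (by rw [hs0]; linarith)
        have hite : (if (∑ l, |Function.update x i (0:ℝ) l|) = (k:ℝ) * τ
            then 0 else 1) ≤ 1 := by split <;> omega
        calc _ ≤ (F.card - 1) * 2 + 1 :=
              add_le_add (Nat.mul_le_mul_right 2 hc) hite
          _ ≤ N - 1 := by omega
      have hy2mem : Function.update x i (ε * t2) ∈ convexHull ℝ {v : ι → ℝ |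
          (∀ i, v i = 0 ∨ v i = τ ∨ v i = -τ) ∧ {i | v i ≠ 0}.ncard ≤ k} := by
        have habs2 : |ε * t2| = t2 := habs t2 ht2pos.le
        refine ih (N - 1) (by omega) _ ?_ (hbnd _ (by rw [habs2]; exact ht2τ))
          (by rw [hs2]; linarith)
        rcases ht2cases with hc2 | hc2
        · -- t2 = τ : coordinate i non-fractional
          have hc := Finset.card_le_card (hsub (ε * t2) (Or.inr (by rw [habs2, hc2])))
          rw [Finset.card_erase_of_mem hiF] at hc
          have hite : (if (∑ l, |Function.update x i (ε * t2) l|) = (k:ℝ) * τ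
              then 0 else 1) ≤ 1 := by split <;> omega
          calc _ ≤ (F.card - 1) * 2 + 1 :=
                add_le_add (Nat.mul_le_mul_right 2 hc) hite
            _ ≤ N - 1 := by omega
        · -- tight endpoint
          have htight : (∑ l, |Function.update x i (ε * t2) l|) = (k:ℝ) * τ := by
            rw [hs2, hc2]; ring
          have hc := Finset.card_le_card (hsubF (ε * t2))
          rw [if_pos htight]
          calc _ ≤ F.card * 2 + 0 := by omega
            _ ≤ N - 1 := by omega
      have hxeq : x = ((t2 - a) / t2) • Function.update x i (0:ℝ)
          + (a / t2) • Function.update x i (ε * t2) := by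
        funext l
        simp only [Pi.add_apply, Pi.smul_apply, smul_eq_mul]
        rcases eq_or_ne l i with rfl | h
        · rw [Function.update_self, Function.update_self, hεx]
          field_simp
          ring
        · rw [Function.update_of_ne h, Function.update_of_ne h]
          field_simp
          ring
      rw [hxeq]
      exact (convex_convexHull ℝ _) hy0mem hy2mem
        (div_nonneg (by linarith) ht2pos.le) (div_nonneg (by linarith) ht2pos.le)
        (by field_simp; ring)

/-- The k-sparse polytope of radius τ in ℝⁿ: the convex hull of all vectors
with entries in {0, τ, −τ} and at most k nonzero entries. -/
noncomputable def kSparsePolytope (n k : ℕ) (τ : ℝ) : Set (EuclideanSpace ℝ (Fin n)) :=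
  convexHull ℝ {v : EuclideanSpace ℝ (Fin n) |
    (∀ i, v i = 0 ∨ v i = τ ∨ v i = -τ) ∧ {i | v i ≠ 0}.ncard ≤ k}

/-- the k-sparse polytope P_k(τ) equals the ball of radius τ of
the norm x ↦ max{‖x‖_∞, ‖x‖₁/k}. -/
theorem kSparsePolytope_eq_ball (n k : ℕ) (hn : 1 ≤ n) (hk1 : 1 ≤ k) (hkn : k ≤ n)
    (τ : ℝ) (hτ : 0 < τ) :
    kSparsePolytope n k τ =
      {x : EuclideanSpace ℝ (Fin n) |
        max (⨆ i, |x i|) ((∑ i, |x i|) / (k : ℝ)) ≤ τ} := by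
  have hne : Nonempty (Fin n) := ⟨⟨0, hn⟩⟩
  have hk0 : (0:ℝ) < k := by exact_mod_cast hk1
  have hSeq : ∀ x : EuclideanSpace ℝ (Fin n),
      max (⨆ i, |x i|) ((∑ i, |x i|) / (k : ℝ)) ≤ τ ↔
        (∀ i, |x i| ≤ τ) ∧ (∑ i, |x i|) ≤ (k : ℝ) * τ := by
    intro x
    rw [max_le_iff, div_le_iff₀ hk0]
    constructor
    · rintro ⟨h1, h2⟩
      exact ⟨fun i => le_trans
        (le_ciSup (f := fun i => |x i|) (Set.Finite.bddAbove (Set.finite_range _)) i) h1, by linarith⟩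
    · rintro ⟨h1, h2⟩
      exact ⟨ciSup_le h1, by linarith⟩
  apply Set.Subset.antisymm
  · apply convexHull_min
    · rintro v ⟨hv1, hv2⟩
      rw [Set.mem_setOf_eq, hSeq]
      have hv' : ∀ i, v i = 0 ∨ |v i| = τ := by
        intro i
        rcases hv1 i with h | h | h
        · exact Or.inl h
        · exact Or.inr (by rw [h, abs_of_pos hτ])
        · exact Or.inr (by rw [h, abs_neg, abs_of_pos hτ])
      refine ⟨fun i => ?_, ?_⟩
      · rcases hv' i with h | h
        · rw [h]; simpa using hτ.le
        · rw [h]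
      · rw [vert_sum hv']
        rw [ncard_ne_zero] at hv2
        have hc : ((Finset.univ.filter fun i => v i ≠ 0).card : ℝ) ≤ k := by
          exact Nat.cast_le.mpr hv2
        exact mul_le_mul_of_nonneg_right hc hτ.le
    · intro x hx y hy p q hp hq hpq
      rw [Set.mem_setOf_eq, hSeq] at hx hy ⊢
      have hcoord : ∀ i, (p • x + q • y) i = p * x i + q * y i := fun i => rfl
      have hptwise : ∀ i, |(p • x + q • y) i| ≤ p * |x i| + q * |y i| := by
        intro i
        rw [hcoord]
        calc |p * x i + q * y i| ≤ |p * x i| + |q * y i| := abs_add_le _ _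
          _ = p * |x i| + q * |y i| := by
            rw [abs_mul, abs_mul, abs_of_nonneg hp, abs_of_nonneg hq]
      refine ⟨fun i => ?_, ?_⟩
      · calc |(p • x + q • y) i| ≤ p * |x i| + q * |y i| := hptwise i
          _ ≤ p * τ + q * τ :=
            add_le_add (mul_le_mul_of_nonneg_left (hx.1 i) hp)
              (mul_le_mul_of_nonneg_left (hy.1 i) hq)
          _ = τ := by rw [← add_mul, hpq, one_mul]
      · calc ∑ i, |(p • x + q • y) i| ≤ ∑ i, (p * |x i| + q * |y i|) :=
            Finset.sum_le_sum fun i _ => hptwise i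
          _ = p * (∑ i, |x i|) + q * (∑ i, |y i|) := by
            rw [Finset.sum_add_distrib, Finset.mul_sum, Finset.mul_sum]
          _ ≤ p * ((k : ℝ) * τ) + q * ((k : ℝ) * τ) :=
            add_le_add (mul_le_mul_of_nonneg_left hx.2 hp)
              (mul_le_mul_of_nonneg_left hy.2 hq)
          _ = (k : ℝ) * τ := by rw [← add_mul, hpq, one_mul]
  · intro x hx
    rw [Set.mem_setOf_eq, hSeq] at hx
    have hmem := key k τ hτ _ x le_rfl hx.1 hx.2
    have himg := Set.mem_image_of_mem
      ((WithLp.linearEquiv 2 ℝ (Fin n → ℝ)).symm : (Fin n → ℝ) →ₗ[ℝ] EuclideanSpace ℝ (Fin n)) hmem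
    rw [LinearMap.image_convexHull] at himg
    unfold kSparsePolytope
    refine convexHull_mono ?_ himg
    rintro _ ⟨v, hv, rfl⟩
    exact hv
end

section
/- Let n ≥ 1, g ∈ ℝⁿ, 1 ≤ k ≤ n and τ > 0. Let S ⊆ {1,…,n} be a set of k indices such that |g_i| ≥ |g_j| for all i ∈ S and j ∉ S. Then the vector v* defined by (v*)_i = −τ·sign(g_i) for i ∈ S and (v*)_i = 0 otherwise belongs to P_k(τ) and satisfies ⟨v*, g⟩ ≤ ⟨v, g⟩ for every v ∈ P_k(τ). -/
open RealInnerProductSpace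

private lemma sign_mul_self' (x : ℝ) : Real.sign x * x = |x| := by
  rcases lt_trichotomy x 0 with h|h|h
  · rw [Real.sign_of_neg h, abs_of_neg h]; ring
  · simp [h]
  · rw [Real.sign_of_pos h, abs_of_pos h]; ring

private lemma sum_abs_top {n : ℕ} (g : Fin n → ℝ) (S T : Finset (Fin n))
    (htop : ∀ i ∈ S, ∀ j ∉ S, |g j| ≤ |g i|) (hcard : T.card ≤ S.card) :
    ∑ i ∈ T, |g i| ≤ ∑ i ∈ S, |g i| := by
  have hT : ∑ i ∈ T, |g i| = ∑ i ∈ T ∩ S, |g i| + ∑ i ∈ T \ S, |g i| :=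
    (Finset.sum_inter_add_sum_sdiff T S _).symm
  have hS : ∑ i ∈ S, |g i| = ∑ i ∈ S ∩ T, |g i| + ∑ i ∈ S \ T, |g i| :=
    (Finset.sum_inter_add_sum_sdiff S T _).symm
  rw [hT, hS, Finset.inter_comm]
  have hcard2 : (T \ S).card ≤ (S \ T).card := by
    have h1 := Finset.card_inter_add_card_sdiff T S
    have h2 := Finset.card_inter_add_card_sdiff S T
    rw [Finset.inter_comm] at h2
    omega
  have key : ∑ i ∈ T \ S, |g i| ≤ ∑ i ∈ S \ T, |g i| := by
    rcases (S \ T).eq_empty_or_nonempty with he | hne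
    · have : T \ S = ∅ := Finset.card_eq_zero.mp (by
        have := hcard2; rw [he] at this; simpa using this)
      simp [this, he]
    · obtain ⟨i0, hi0, hmin⟩ := Finset.exists_min_image (S \ T) (fun i => |g i|) hne
      have hi0S : i0 ∈ S := (Finset.mem_sdiff.mp hi0).1
      have h1 : ∑ i ∈ T \ S, |g i| ≤ (T \ S).card • |g i0| := by
        apply Finset.sum_le_card_nsmul
        intro j hj
        exact htop i0 hi0S j (Finset.mem_sdiff.mp hj).2
      have h2 : (T \ S).card • |g i0| ≤ (S \ T).card • |g i0| :=
        nsmul_le_nsmul_left (abs_nonneg _) hcard2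
      have h3 : (S \ T).card • |g i0| ≤ ∑ i ∈ S \ T, |g i| :=
        Finset.card_nsmul_le_sum _ _ _ (fun j hj => hmin j hj)
      linarith
  linarith


/-- the LMO solution over the k-sparse polytope. If S is a set of
k indices of largest-magnitude entries of g, then the vector with entries
−τ·sign(g_i) on S and 0 elsewhere lies in P_k(τ) and minimizes ⟨·, g⟩ over
P_k(τ). -/
theorem kSparsePolytope_lmo (n k : ℕ) (hn : 1 ≤ n) (hk1 : 1 ≤ k) (hkn : k ≤ n)
    (τ : ℝ) (hτ : 0 < τ)
    (g : EuclideanSpace ℝ (Fin n))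
    (S : Finset (Fin n)) (hScard : S.card = k)
    (htop : ∀ i ∈ S, ∀ j ∉ S, |g j| ≤ |g i|)
    (vstar : EuclideanSpace ℝ (Fin n))
    (hvstar : ∀ i, vstar i = if i ∈ S then -τ * Real.sign (g i) else 0) :
    vstar ∈ kSparsePolytope n k τ ∧
    ∀ v ∈ kSparsePolytope n k τ, ⟪vstar, g⟫ ≤ ⟪v, g⟫ := by
  -- inner product formula
  have hinner : ∀ v : EuclideanSpace ℝ (Fin n), ⟪v, g⟫ = ∑ i, v i * g i := by
    intro v
    simp [PiLp.inner_apply, RCLike.inner_apply]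
    exact Finset.sum_congr rfl (fun i _ => mul_comm _ _)
  -- value of ⟪vstar, g⟫
  have hvg : ⟪vstar, g⟫ = -τ * ∑ i ∈ S, |g i| := by
    rw [hinner, Finset.mul_sum]
    rw [← Finset.sum_subset (Finset.subset_univ S)]
    · apply Finset.sum_congr rfl
      intro i hi
      rw [hvstar i, if_pos hi, mul_assoc, sign_mul_self' (g i)]
    · intro i _ hi
      rw [hvstar i, if_neg hi, zero_mul]
  constructor
  · apply subset_convexHull
    constructor
    · intro i
      rw [hvstar i]
      by_cases hi : i ∈ S
      · rw [if_pos hi]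
        rcases lt_trichotomy (g i) 0 with h|h|h
        · right; left; rw [Real.sign_of_neg h]; ring
        · left; simp [h]
        · right; right; rw [Real.sign_of_pos h]; ring
      · left; rw [if_neg hi]
    · calc {i | vstar i ≠ 0}.ncard ≤ (↑S : Set (Fin n)).ncard := by
            apply Set.ncard_le_ncard _ (S.finite_toSet)
            intro i hi
            simp only [Set.mem_setOf_eq] at hi
            by_contra h
            exact hi (by rw [hvstar i, if_neg (by simpa using h)])
          _ = k := by rw [Set.ncard_coe_finset, hScard]
  · -- optimality
    have hconv : Convex ℝ {v : EuclideanSpace ℝ (Fin n) | ⟪vstar, g⟫ ≤ ⟪v, g⟫} := by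
      apply convex_halfSpace_ge
      exact ⟨fun x y => inner_add_left x y g, fun c x => real_inner_smul_left x g c⟩
    intro v hv
    refine convexHull_min ?_ hconv hv
    intro w hw
    obtain ⟨hw1, hw2⟩ := hw
    simp only [Set.mem_setOf_eq]
    rw [hvg, hinner]
    set T : Finset (Fin n) := Finset.univ.filter (fun i => w i ≠ 0) with hTdef
    have hTcard : T.card ≤ S.card := by
      rw [hScard]
      refine le_trans (le_of_eq ?_) hw2
      rw [Set.ncard_eq_toFinset_card']
      congr 1
      ext i
      simp [hTdef]
    have hsum : ∑ i, w i * g i = ∑ i ∈ T, w i * g i := by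
      rw [← Finset.sum_subset (Finset.subset_univ T)]
      intro i _ hi
      have : w i = 0 := by simpa [hTdef] using hi
      rw [this, zero_mul]
    rw [hsum]
    have hstep : ∀ i ∈ T, -τ * |g i| ≤ w i * g i := by
      intro i hi
      have hwi : w i ≠ 0 := by simpa [hTdef] using hi
      have habs : |w i| = τ := by
        rcases hw1 i with h|h|h
        · exact absurd h hwi
        · rw [h, abs_of_pos hτ]
        · rw [h, abs_neg, abs_of_pos hτ]
      calc -τ * |g i| = -(|w i| * |g i|) := by rw [habs]; ring
        _ = -|w i * g i| := by rw [abs_mul]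
        _ ≤ w i * g i := neg_abs_le _
    calc -τ * ∑ i ∈ S, |g i| ≤ -τ * ∑ i ∈ T, |g i| := by
          have := sum_abs_top g S T htop hTcard
          nlinarith
      _ = ∑ i ∈ T, -τ * |g i| := Finset.mul_sum _ _ _
      _ ≤ ∑ i ∈ T, w i * g i := Finset.sum_le_sum hstep
end

section
/- Let n ≥ 1, 1 ≤ k ≤ n and τ > 0. The (k, ∞)-support norm ball C_{(k,∞)}(τ) = conv{v ∈ ℝⁿ : ‖v‖₀ ≤ k, ‖v‖_∞ ≤ τ} coincides with the k-sparse polytope P_k(τ) = conv{v ∈ {0, τ, −τ}ⁿ : ‖v‖₀ ≤ k}; i.e., conv{v ∈ ℝⁿ : ‖v‖₀ ≤ k, ‖v‖_∞ ≤ τ} = conv{v ∈ {0, τ, −τ}ⁿ : ‖v‖₀ ≤ k}. -/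
/-- the (k, ∞)-support norm ball, i.e. the convex hull of all
k-sparse vectors with ℓ^∞ norm at most τ, coincides with the k-sparse polytope
P_k(τ), the convex hull of all k-sparse vectors with entries in {0, τ, −τ}. -/
theorem kInftySupportBall_eq_kSparsePolytope (n k : ℕ) (hn : 1 ≤ n) (hk1 : 1 ≤ k)
    (hkn : k ≤ n) (τ : ℝ) (hτ : 0 < τ) :
    convexHull ℝ {v : EuclideanSpace ℝ (Fin n) |
        {i | v i ≠ 0}.ncard ≤ k ∧ (⨆ i, |v i|) ≤ τ} =
    convexHull ℝ {v : EuclideanSpace ℝ (Fin n) |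
        (∀ i, v i = 0 ∨ v i = τ ∨ v i = -τ) ∧ {i | v i ≠ 0}.ncard ≤ k} := by
  have hn' : Nonempty (Fin n) := ⟨⟨0, hn⟩⟩
  apply Set.Subset.antisymm
  · apply convexHull_min _ (convex_convexHull ℝ _)
    intro v hv
    obtain ⟨hs, hsup⟩ := hv
    set t : Fin n → Set ℝ := fun i => if v i ≠ 0 then {0, τ, -τ} else {0} with ht
    have hsub : (WithLp.linearEquiv 2 ℝ (Fin n → ℝ)).symm.toLinearMap '' Set.pi Set.univ t ⊆ {v : EuclideanSpace ℝ (Fin n) |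
        (∀ i, v i = 0 ∨ v i = τ ∨ v i = -τ) ∧ {i | v i ≠ 0}.ncard ≤ k} := by
      rintro _ ⟨w, hw, rfl⟩
      show (∀ i, w i = 0 ∨ w i = τ ∨ w i = -τ) ∧ {i | w i ≠ 0}.ncard ≤ k
      have hwi : ∀ i, w i ∈ t i := fun i => hw i (Set.mem_univ i)
      constructor
      · intro i
        have := hwi i
        by_cases h : v i = 0
        · simp [ht, h] at this; exact Or.inl this
        · simpa [ht, h] using this
      · have hss : {i | w i ≠ 0} ⊆ {i | v i ≠ 0} := by
          intro i hi
          by_contra h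
          have hv0 : v i = 0 := by simpa using h
          have := hwi i
          simp [ht, hv0] at this
          exact hi this
        exact le_trans (Set.ncard_le_ncard hss (Set.toFinite _)) hs
    refine convexHull_mono hsub ?_
    rw [← LinearMap.image_convexHull]
    refine ⟨v.ofLp, ?_, rfl⟩
    apply mem_convexHull_pi
    intro i _
    have hle : |v i| ≤ τ :=
      le_trans (le_ciSup (f := fun j => |v j|) (Set.Finite.bddAbove (Set.finite_range _)) i) hsup
    by_cases h : v i ≠ 0
    · have : v i ∈ convexHull ℝ ({-τ, τ} : Set ℝ) := by
        rw [convexHull_pair, segment_eq_Icc (by linarith)]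
        exact abs_le.mp hle
      refine convexHull_mono ?_ this
      intro x hx
      simp only [ht, h, if_pos, ne_eq, not_false_eq_true, if_true]
      rcases hx with h1 | h1
      · right; right; exact h1
      · right; left; exact h1
    · simp only [ne_eq, not_not] at h
      have : (0:ℝ) ∈ convexHull ℝ ({0} : Set ℝ) := subset_convexHull ℝ _ rfl
      simpa [ht, h] using this
  · apply convexHull_min _ (convex_convexHull ℝ _)
    intro w hw
    obtain ⟨hvals, hcard⟩ := hw
    apply subset_convexHull
    refine ⟨hcard, ciSup_le fun i => ?_⟩
    rcases hvals i with h | h | h <;> simp [h, abs_of_pos hτ, le_of_lt hτ]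
end

section
/- Let C ⊆ ℝⁿ be a compact convex set with L₂-diameter at most D, and let L : ℝⁿ → ℝ be differentiable and M-smooth. Let θ ∈ C, let g ∈ ℝⁿ (a stochastic gradient estimate), let v ∈ argmin_{u ∈ C} ⟨g, u⟩, let η ∈ [0, 1], and set θ' = θ + η(v − θ). Then L(θ') ≤ L(θ) − η·𝒢(θ) + η·D·‖∇L(θ) − g‖ + (M D² η²)/2, where 𝒢(θ) = max_{u ∈ C} ⟨u − θ, −∇L(θ)⟩ is the Frank–Wolfe gap of L at θ on C. -/
open RealInnerProductSpace

lemma descent_aux {F : Type*} [NormedAddCommGroup F] [InnerProductSpace ℝ F] [CompleteSpace F]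
    (L : F → ℝ) (gradL : F → F) (hdiff : ∀ x, HasGradientAt L (gradL x) x)
    (M : ℝ) (hM : 0 ≤ M) (hsmooth : ∀ x y, ‖gradL x - gradL y‖ ≤ M * ‖x - y‖)
    (x y : F) : L y ≤ L x + ⟪gradL x, y - x⟫ + M / 2 * ‖y - x‖ ^ 2 := by
  set d := y - x with hd
  have hgradcont : Continuous gradL := by
    have hl : LipschitzWith (Real.toNNReal M) gradL := by
      apply LipschitzWith.of_dist_le_mul
      intro a b
      simpa [dist_eq_norm, Real.coe_toNNReal M hM] using hsmooth a b
    exact hl.continuous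
  have hφ : ∀ t : ℝ, HasDerivAt (fun t : ℝ => L (x + t • d)) ⟪gradL (x + t • d), d⟫ t := by
    intro t
    have h1 : HasDerivAt (fun t : ℝ => x + t • d) d t := by
      simpa using ((hasDerivAt_id t).smul_const d).const_add x
    have h2 := ((hdiff (x + t • d)).hasFDerivAt).comp_hasDerivAt t h1
    simp at h2; exact h2
  have hcont : Continuous fun t : ℝ => ⟪gradL (x + t • d), d⟫ :=
    Continuous.inner (hgradcont.comp (by continuity)) continuous_const
  have hint : ∫ t in (0:ℝ)..1, ⟪gradL (x + t • d), d⟫ = L y - L x := by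
    have h := intervalIntegral.integral_eq_sub_of_hasDerivAt (f := fun t : ℝ => L (x + t • d))
      (fun t _ => hφ t) (hcont.intervalIntegrable 0 1)
    simpa [hd] using h
  have hbound : ∀ t ∈ Set.Icc (0:ℝ) 1,
      ⟪gradL (x + t • d), d⟫ ≤ ⟪gradL x, d⟫ + M * ‖d‖ ^ 2 * t := by
    intro t ht
    have h1 : ⟪gradL (x + t • d) - gradL x, d⟫ ≤ M * ‖d‖ ^ 2 * t := by
      calc ⟪gradL (x + t • d) - gradL x, d⟫ ≤ ‖gradL (x + t • d) - gradL x‖ * ‖d‖ :=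
            real_inner_le_norm _ _
        _ ≤ (M * ‖x + t • d - x‖) * ‖d‖ := by
            have := hsmooth (x + t • d) x
            have hn : (0:ℝ) ≤ ‖d‖ := norm_nonneg _
            nlinarith [norm_nonneg (gradL (x + t • d) - gradL x)]
        _ = M * ‖d‖ ^ 2 * t := by
            have : ‖x + t • d - x‖ = t * ‖d‖ := by
              rw [add_sub_cancel_left, norm_smul, Real.norm_eq_abs, abs_of_nonneg ht.1]
            rw [this]; ring
    have h2 : ⟪gradL (x + t • d), d⟫ = ⟪gradL x, d⟫ + ⟪gradL (x + t • d) - gradL x, d⟫ := by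
      rw [inner_sub_left]; ring
    linarith
  have hIle : ∫ t in (0:ℝ)..1, ⟪gradL (x + t • d), d⟫
      ≤ ∫ t in (0:ℝ)..1, (⟪gradL x, d⟫ + M * ‖d‖ ^ 2 * t) := by
    apply intervalIntegral.integral_mono_on (by norm_num)
      (hcont.intervalIntegrable 0 1)
      ((by continuity : Continuous fun t : ℝ => ⟪gradL x, d⟫ + M * ‖d‖ ^ 2 * t).intervalIntegrable 0 1)
      hbound
  have hIval : ∫ t in (0:ℝ)..1, (⟪gradL x, d⟫ + M * ‖d‖ ^ 2 * t)
      = ⟪gradL x, d⟫ + M / 2 * ‖d‖ ^ 2 := by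
    rw [intervalIntegral.integral_add (intervalIntegrable_const)
      ((intervalIntegral.intervalIntegrable_id).const_mul _)]
    rw [intervalIntegral.integral_const_mul, integral_id, intervalIntegral.integral_const]
    simp only [smul_eq_mul]
    ring
  rw [hint] at hIle
  rw [hIval] at hIle
  linarith

/-- per-step descent inequality of Stochastic Frank–Wolfe. With
C compact convex of L₂-diameter at most D, L differentiable and M-smooth,
θ ∈ C, g a (stochastic) gradient estimate, v a minimizer of ⟨g, ·⟩ over C,
η ∈ [0,1] and θ' = θ + η(v − θ):
L(θ') ≤ L(θ) − η·𝒢(θ) + η·D·‖∇L(θ) − g‖ + M D² η²/2, where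
𝒢(θ) = max_{u∈C} ⟨u − θ, −∇L(θ)⟩ is the Frank–Wolfe gap. -/
theorem sfw_descent_inequality (n : ℕ)
    (C : Set (EuclideanSpace ℝ (Fin n)))
    (hconv : Convex ℝ C) (hcomp : IsCompact C)
    (D : ℝ) (hdiam : ∀ x ∈ C, ∀ y ∈ C, ‖x - y‖ ≤ D)
    (L : EuclideanSpace ℝ (Fin n) → ℝ)
    (gradL : EuclideanSpace ℝ (Fin n) → EuclideanSpace ℝ (Fin n))
    (hdiff : ∀ x, HasGradientAt L (gradL x) x)
    (M : ℝ) (hM : 0 ≤ M)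
    (hsmooth : ∀ x y, ‖gradL x - gradL y‖ ≤ M * ‖x - y‖)
    (θ : EuclideanSpace ℝ (Fin n)) (hθ : θ ∈ C)
    (g : EuclideanSpace ℝ (Fin n))
    (v : EuclideanSpace ℝ (Fin n)) (hvC : v ∈ C)
    (hvmin : ∀ u ∈ C, ⟪g, v⟫ ≤ ⟪g, u⟫)
    (η : ℝ) (hη : η ∈ Set.Icc (0 : ℝ) 1)
    (θ' : EuclideanSpace ℝ (Fin n)) (hθ' : θ' = θ + η • (v - θ)) :
    L θ' ≤ L θ - η * sSup ((fun u => ⟪u - θ, -gradL θ⟫) '' C)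
      + η * D * ‖gradL θ - g‖ + M * D ^ 2 * η ^ 2 / 2 := by
  obtain ⟨hη0, hη1⟩ := hη
  have hD0 : (0:ℝ) ≤ D := le_trans (by simp) (hdiam θ hθ θ hθ)
  -- maximizer of the FW gap objective
  obtain ⟨u, huC, hu⟩ := hcomp.exists_sSup_image_eq (f := fun u => ⟪u - θ, -gradL θ⟫) ⟨θ, hθ⟩
    (Continuous.continuousOn (Continuous.inner (continuous_id.sub continuous_const)
      continuous_const))
  -- descent lemma
  have h0 := descent_aux L gradL hdiff M hM hsmooth θ θ'
  have hδ : θ' - θ = η • (v - θ) := by rw [hθ']; abel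
  rw [hδ] at h0
  have hinner : ⟪gradL θ, η • (v - θ)⟫ = η * ⟪gradL θ, v - θ⟫ := real_inner_smul_right _ _ _
  have hnorm : ‖η • (v - θ)‖ = η * ‖v - θ‖ := by
    rw [norm_smul, Real.norm_eq_abs, abs_of_nonneg hη0]
  -- key gap bound
  have hkey : ⟪gradL θ, v - θ⟫ ≤ -⟪u - θ, -gradL θ⟫ + D * ‖gradL θ - g‖ := by
    have hid : ⟪gradL θ, v - θ⟫
        = ⟪g, v⟫ - ⟪g, u⟫ + ⟪gradL θ, u - θ⟫ + ⟪gradL θ - g, v - u⟫ := by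
      simp only [inner_sub_left, inner_sub_right]; ring
    have h1 : ⟪g, v⟫ - ⟪g, u⟫ ≤ 0 := by linarith [hvmin u huC]
    have h2 : ⟪gradL θ - g, v - u⟫ ≤ D * ‖gradL θ - g‖ := by
      calc ⟪gradL θ - g, v - u⟫ ≤ ‖gradL θ - g‖ * ‖v - u‖ := real_inner_le_norm _ _
        _ ≤ ‖gradL θ - g‖ * D := by
            exact mul_le_mul_of_nonneg_left (hdiam v hvC u huC) (norm_nonneg _)
        _ = D * ‖gradL θ - g‖ := mul_comm _ _
    have h3 : ⟪gradL θ, u - θ⟫ = -⟪u - θ, -gradL θ⟫ := by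
      rw [real_inner_comm, inner_neg_right]; ring
    linarith
  have hsq : M / 2 * ‖η • (v - θ)‖ ^ 2 ≤ M * D ^ 2 * η ^ 2 / 2 := by
    rw [hnorm]
    have hvθ : ‖v - θ‖ ≤ D := hdiam v hvC θ hθ
    have h1 : η * ‖v - θ‖ ≤ η * D := mul_le_mul_of_nonneg_left hvθ hη0
    have h2 : (η * ‖v - θ‖) ^ 2 ≤ (η * D) ^ 2 := pow_le_pow_left₀ (by positivity) h1 2
    have h3 := mul_le_mul_of_nonneg_left h2 (by linarith : (0:ℝ) ≤ M / 2)
    calc M / 2 * (η * ‖v - θ‖) ^ 2 ≤ M / 2 * (η * D) ^ 2 := h3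
      _ = M * D ^ 2 * η ^ 2 / 2 := by ring
  have hmul : η * ⟪gradL θ, v - θ⟫ ≤ η * (-⟪u - θ, -gradL θ⟫ + D * ‖gradL θ - g‖) :=
    mul_le_mul_of_nonneg_left hkey hη0
  rw [hinner] at h0
  rw [hu]
  nlinarith [h0, hsq, hmul]
end

section
/- In the setting of the Stochastic Frank–Wolfe algorithm with gradient rescaling (feasible region C ⊆ ℝⁿ of L₂-diameter at most D, sample losses ℓ with ‖∇_θℓ(θ,ω)‖ ≤ G, M-smooth expected loss L, iterates θ_{t+1} = θ_t + η_t(v_t − θ_t) with η_t = ‖∇̃L(θ_t)‖·η ∈ [0,1], v_t ∈ argmin_{v∈C}⟨∇̃L(θ_t), v⟩, and i.i.d. batches of size b at each step), the following summed bound holds for every T ≥ 1: Σ_{t=0}^{T−1} 𝔼[η_t · 𝒢(θ_t)] ≤ (L(θ₀) − min_{θ∈C} L(θ)) + T D G² η / √b + T M D² G² η² / 2, where 𝒢(θ) = max_{v∈C} ⟨v − θ, −∇L(θ)⟩ is the Frank–Wolfe gap and the expectation is over the random batches. -/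
open MeasureTheory RealInnerProductSpace

lemma my_coord_le {n : ℕ} (x : EuclideanSpace ℝ (Fin n)) (i : Fin n) : |x i| ≤ ‖x‖ := by
  have h := abs_real_inner_le_norm (EuclideanSpace.single i (1:ℝ)) x
  simpa [EuclideanSpace.inner_single_left, EuclideanSpace.norm_single] using h

lemma my_prod_two {b : ℕ} (v : Fin b → ℝ) (j k : Fin b) (hjk : j ≠ k)
    (hv : ∀ l, l ≠ j → l ≠ k → v l = 1) : ∏ l, v l = v j * v k := by
  rw [← Finset.mul_prod_erase Finset.univ v (Finset.mem_univ j),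
      ← Finset.mul_prod_erase _ v
        (Finset.mem_erase.2 ⟨Ne.symm hjk, Finset.mem_univ k⟩)]
  rw [Finset.prod_eq_one, mul_one]
  intro l hl
  have h1 := Finset.mem_erase.1 hl
  have h2 := Finset.mem_erase.1 h1.2
  exact hv l h2.1 h1.1

lemma my_prod_one {b : ℕ} (v : Fin b → ℝ) (j : Fin b)
    (hv : ∀ l, l ≠ j → v l = 1) : ∏ l, v l = v j := by
  rw [← Finset.mul_prod_erase Finset.univ v (Finset.mem_univ j),
      Finset.prod_eq_one, mul_one]
  intro l hl
  exact hv l (Finset.mem_erase.1 hl).1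

section core
variable {Ωt : Type*} [MeasurableSpace Ωt] (ℙ : Measure Ωt) [IsProbabilityMeasure ℙ]

lemma my_pi_prod_two (b : ℕ) (q : Ωt → ℝ) (j k : Fin b) (hjk : j ≠ k) :
    ∫ w : Fin b → Ωt, q (w j) * q (w k) ∂(Measure.pi fun _ : Fin b => ℙ)
      = (∫ ω, q ω ∂ℙ) ^ 2 := by
  letI : MeasureSpace Ωt := ⟨ℙ⟩
  set F : Fin b → Ωt → ℝ := fun l => if l = j then q else if l = k then q else fun _ => 1 with hF
  have h1 : ∀ w : Fin b → Ωt, q (w j) * q (w k) = ∏ l, F l (w l) := by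
    intro w
    rw [my_prod_two (fun l => F l (w l)) j k hjk]
    · simp [hF, hjk]
    · intro l h1 h2; simp [hF, h1, h2]
  have h2 : (Measure.pi fun _ : Fin b => ℙ) = (volume : Measure (Fin b → Ωt)) := rfl
  rw [h2]
  simp_rw [h1]
  rw [MeasureTheory.integral_fintype_prod_volume_eq_prod F]
  rw [my_prod_two (fun l => ∫ x, F l x) j k hjk]
  · simp only [hF, if_pos rfl, if_neg hjk.symm, sq]
    rfl
  · intro l hl1 hl2; simp [hF, hl1, hl2]

lemma my_pi_prod_one (b : ℕ) (q : Ωt → ℝ) (j : Fin b) :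
    ∫ w : Fin b → Ωt, q (w j) ∂(Measure.pi fun _ : Fin b => ℙ) = ∫ ω, q ω ∂ℙ := by
  letI : MeasureSpace Ωt := ⟨ℙ⟩
  set F : Fin b → Ωt → ℝ := fun l => if l = j then q else fun _ => 1 with hF
  have h1 : ∀ w : Fin b → Ωt, q (w j) = ∏ l, F l (w l) := by
    intro w
    rw [my_prod_one (fun l => F l (w l)) j]
    · simp [hF]
    · intro l h1; simp [hF, h1]
  have h2 : (Measure.pi fun _ : Fin b => ℙ) = (volume : Measure (Fin b → Ωt)) := rfl
  rw [h2]
  simp_rw [h1]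
  rw [MeasureTheory.integral_fintype_prod_volume_eq_prod F]
  rw [my_prod_one (fun l => ∫ x, F l x) j]
  · simp only [hF, if_pos rfl]
    rfl
  · intro l hl1; simp [hF, hl1]


end core

set_option maxHeartbeats 1000000 in
theorem my_descent {F : Type*} [NormedAddCommGroup F] [InnerProductSpace ℝ F] [CompleteSpace F]
    (L : F → ℝ) (gradL : F → F)
    (hgradL : ∀ θ, HasGradientAt L (gradL θ) θ)
    (M : ℝ) (hM : 0 ≤ M)
    (hsmooth : ∀ x y, ‖gradL x - gradL y‖ ≤ M * ‖x - y‖)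
    (x y : F) :
    L y ≤ L x + ⟪gradL x, y - x⟫ + M / 2 * ‖y - x‖ ^ 2 := by
  have hline : ∀ s : ℝ, HasDerivAt (fun s : ℝ => x + s • (y - x)) (y - x) s := by
    intro s
    simpa using ((hasDerivAt_id s).smul_const (y - x)).const_add x
  have hg : ∀ s : ℝ, HasDerivAt (fun s => L (x + s • (y - x)))
      ⟪gradL (x + s • (y - x)), y - x⟫ s := by
    intro s
    have h1 := (hgradL (x + s • (y - x))).hasFDerivAt.comp_hasDerivAt s (hline s)
    have h2 : (InnerProductSpace.toDual ℝ F (gradL (x + s • (y - x)))) (y - x)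
        = ⟪gradL (x + s • (y - x)), y - x⟫ := InnerProductSpace.toDual_apply_apply
    rw [h2] at h1
    exact h1
  have hgradcont : Continuous gradL := by
    refine LipschitzWith.continuous (K := ⟨M, hM⟩) (LipschitzWith.of_dist_le_mul ?_)
    intro a b
    rw [dist_eq_norm, dist_eq_norm]
    exact hsmooth a b
  have hlinecont : Continuous fun s : ℝ => x + s • (y - x) :=
    continuous_const.add (continuous_id.smul continuous_const)
  have hcont : Continuous fun s : ℝ => ⟪gradL (x + s • (y - x)), y - x⟫ :=
    Continuous.inner (hgradcont.comp hlinecont) continuous_const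
  have hFTC : L y - L x = ∫ s in (0:ℝ)..1, ⟪gradL (x + s • (y - x)), y - x⟫ := by
    have := intervalIntegral.integral_eq_sub_of_hasDerivAt
      (f := fun s => L (x + s • (y - x)))
      (fun s _ => hg s) (hcont.intervalIntegrable 0 1)
    rw [this]
    norm_num
  have hrhscont : Continuous fun s : ℝ => ⟪gradL x, y - x⟫ + M * ‖y - x‖ ^ 2 * s :=
    continuous_const.add (continuous_const.mul continuous_id)
  have hmono : ∫ s in (0:ℝ)..1, ⟪gradL (x + s • (y - x)), y - x⟫
      ≤ ∫ s in (0:ℝ)..1, (⟪gradL x, y - x⟫ + M * ‖y - x‖ ^ 2 * s) := by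
    apply intervalIntegral.integral_mono_on (by norm_num)
      (hcont.intervalIntegrable 0 1) (hrhscont.intervalIntegrable 0 1)
    intro s hs
    have h1 : ⟪gradL (x + s • (y - x)) - gradL x, y - x⟫ ≤ M * s * ‖y - x‖ ^ 2 := by
      calc ⟪gradL (x + s • (y - x)) - gradL x, y - x⟫
        ≤ ‖gradL (x + s • (y - x)) - gradL x‖ * ‖y - x‖ := real_inner_le_norm _ _
        _ ≤ (M * ‖x + s • (y - x) - x‖) * ‖y - x‖ :=
            mul_le_mul_of_nonneg_right (hsmooth _ _) (norm_nonneg _)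
        _ = M * s * ‖y - x‖ ^ 2 := by
            rw [add_sub_cancel_left, norm_smul, Real.norm_eq_abs, abs_of_nonneg hs.1]
            ring
    have h2 : ⟪gradL (x + s • (y - x)), y - x⟫
        = ⟪gradL x, y - x⟫ + ⟪gradL (x + s • (y - x)) - gradL x, y - x⟫ := by
      rw [inner_sub_left]; ring
    rw [h2]
    nlinarith [h1]
  have hrhs : ∫ s in (0:ℝ)..1, (⟪gradL x, y - x⟫ + M * ‖y - x‖ ^ 2 * s)
      = ⟪gradL x, y - x⟫ + M / 2 * ‖y - x‖ ^ 2 := by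
    have hii : IntervalIntegrable (fun s : ℝ => M * ‖y - x‖ ^ 2 * s) volume 0 1 :=
      (continuous_const.mul continuous_id).intervalIntegrable 0 1
    rw [intervalIntegral.integral_add (intervalIntegrable_const) hii]
    simp only [intervalIntegral.integral_const, smul_eq_mul]
    rw [intervalIntegral.integral_const_mul, integral_id]
    ring
  rw [hrhs] at hmono
  linarith [hFTC, hmono]


set_option maxHeartbeats 1000000 in
theorem my_core {Ωt : Type*} [MeasurableSpace Ωt] (ℙ : Measure Ωt) [IsProbabilityMeasure ℙ]
    (n b : ℕ) (hb : 1 ≤ b) (X : Ωt → EuclideanSpace ℝ (Fin n)) (hX : Measurable X)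
    (G : ℝ) (hG0 : 0 ≤ G) (hG : ∀ ω, ‖X ω‖ ≤ G) :
    ∫ w : Fin b → Ωt, ‖(b:ℝ)⁻¹ • (∑ j : Fin b, X (w j)) - ∫ ω, X ω ∂ℙ‖
        ∂(Measure.pi fun _ : Fin b => ℙ) ≤ G / Real.sqrt b := by
  set π : Measure (Fin b → Ωt) := Measure.pi fun _ : Fin b => ℙ with hπ
  haveI : IsProbabilityMeasure π := by rw [hπ]; infer_instance
  have hb0 : (b:ℝ) ≠ 0 := Nat.cast_ne_zero.2 (by omega)
  have hbpos : (0:ℝ) < b := by positivity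
  have hXint : Integrable X ℙ :=
    (integrable_const G).mono' hX.aestronglyMeasurable (Filter.Eventually.of_forall hG)
  set m : EuclideanSpace ℝ (Fin n) := ∫ ω, X ω ∂ℙ with hm
  have hmG : ‖m‖ ≤ G := by
    calc ‖m‖ ≤ ∫ ω, ‖X ω‖ ∂ℙ := norm_integral_le_integral_norm X
    _ ≤ ∫ _ω, G ∂ℙ := integral_mono hXint.norm (integrable_const G)
        (fun ω => hG ω)
    _ = G := by simp
  set Y : Ωt → EuclideanSpace ℝ (Fin n) := fun ω => X ω - m with hYdef
  have hYmeas : Measurable Y := hX.sub measurable_const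
  have hYint : Integrable Y ℙ := hXint.sub (integrable_const m)
  have hYbd : ∀ ω, ‖Y ω‖ ≤ 2 * G := by
    intro ω
    calc ‖X ω - m‖ ≤ ‖X ω‖ + ‖m‖ := norm_sub_le _ _
    _ ≤ 2 * G := by linarith [hG ω]
  have hY0 : ∀ i : Fin n, ∫ ω, Y ω i ∂ℙ = 0 := by
    intro i
    have h2 : ∫ ω, Y ω ∂ℙ = 0 := by
      rw [hYdef]
      rw [integral_sub hXint (integrable_const m)]
      simp [hm]
    have h := (EuclideanSpace.proj (𝕜 := ℝ) i).integral_comp_comm hYint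
    rw [h2] at h
    have h3 : ∫ ω, Y ω i ∂ℙ = (0 : EuclideanSpace ℝ (Fin n)) i := h
    simpa using h3
  -- second moment of Y
  have hYsq_int : Integrable (fun ω => ‖Y ω‖ ^ 2) ℙ := by
    refine (integrable_const ((2*G)^2)).mono' ?_ (Filter.Eventually.of_forall fun ω => ?_)
    · exact (hYmeas.norm.pow_const 2).aestronglyMeasurable
    · simp only [Real.norm_eq_abs, abs_pow, sq_abs]
      exact pow_le_pow_left₀ (norm_nonneg _) (hYbd ω) 2
  have hYsq : ∫ ω, ‖Y ω‖ ^ 2 ∂ℙ ≤ G ^ 2 := by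
    have hinner_int : Integrable (fun ω => ⟪m, X ω⟫) ℙ := by
      have := (innerSL ℝ m).integral_comp_comm hXint
      refine (integrable_const (G*G)).mono' ?_ (Filter.Eventually.of_forall fun ω => ?_)
      · exact ((innerSL ℝ m).continuous.measurable.comp hX).aestronglyMeasurable
      · simp only [Real.norm_eq_abs]
        calc |⟪m, X ω⟫| ≤ ‖m‖ * ‖X ω‖ := abs_real_inner_le_norm _ _
        _ ≤ G * G := mul_le_mul hmG (hG ω) (norm_nonneg _) hG0
    have hinner : ∫ ω, ⟪m, X ω⟫ ∂ℙ = ‖m‖ ^ 2 := by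
      have h := (innerSL ℝ m).integral_comp_comm hXint
      simp only [innerSL_apply_apply] at h
      rw [h, ← hm, real_inner_self_eq_norm_sq]
    have hXsq_int : Integrable (fun ω => ‖X ω‖ ^ 2) ℙ := by
      refine (integrable_const (G^2)).mono' ?_ (Filter.Eventually.of_forall fun ω => ?_)
      · exact (hX.norm.pow_const 2).aestronglyMeasurable
      · simp only [Real.norm_eq_abs, abs_pow, sq_abs]
        exact pow_le_pow_left₀ (norm_nonneg _) (hG ω) 2
    have hexp : ∀ ω, ‖Y ω‖ ^ 2 = ‖X ω‖ ^ 2 - 2 * ⟪m, X ω⟫ + ‖m‖ ^ 2 := by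
      intro ω
      rw [hYdef]
      simp only
      rw [norm_sub_sq_real, real_inner_comm]
    simp_rw [hexp]
    have hsub : Integrable (fun ω => ‖X ω‖ ^ 2 - 2 * ⟪m, X ω⟫) ℙ :=
      hXsq_int.sub (hinner_int.const_mul 2)
    have hmul : Integrable (fun ω => 2 * ⟪m, X ω⟫) ℙ := hinner_int.const_mul 2
    rw [integral_add hsub (integrable_const _),
        integral_sub hXsq_int hmul, integral_const_mul, hinner]
    simp only [integral_const, measure_univ, probReal_univ, ENNReal.toReal_one, smul_eq_mul, one_mul]
    have h3 : ∫ ω, ‖X ω‖ ^ 2 ∂ℙ ≤ G ^ 2 := by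
      calc ∫ ω, ‖X ω‖ ^ 2 ∂ℙ ≤ ∫ _ω, G ^ 2 ∂ℙ := by
            refine integral_mono hXsq_int (integrable_const _) fun ω => ?_
            exact pow_le_pow_left₀ (norm_nonneg _) (hG ω) 2
      _ = G ^ 2 := by simp
    nlinarith [sq_nonneg ‖m‖]
  -- rewrite integrand in terms of Y
  have heq : ∀ w : Fin b → Ωt,
      (b:ℝ)⁻¹ • (∑ j : Fin b, X (w j)) - m = (b:ℝ)⁻¹ • ∑ j : Fin b, Y (w j) := by
    intro w
    have : ∑ j : Fin b, Y (w j) = (∑ j : Fin b, X (w j)) - b • m := by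
      rw [hYdef]
      simp only
      rw [Finset.sum_sub_distrib, Finset.sum_const, Finset.card_univ, Fintype.card_fin]
    rw [this, smul_sub]
    congr 1
    rw [← Nat.cast_smul_eq_nsmul ℝ b m, smul_smul, inv_mul_cancel₀ hb0, one_smul]
  have hcoord_bd : ∀ (ω : Ωt) (i : Fin n), |Y ω i| ≤ 2 * G := fun ω i =>
    le_trans (my_coord_le (Y ω) i) (hYbd ω)
  have hcoordmeas : ∀ (j : Fin b) (i : Fin n),
      Measurable (fun w : Fin b → Ωt => Y (w j) i) := fun j i =>
    ((EuclideanSpace.proj (𝕜 := ℝ) i).continuous.measurable).comp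
      (hYmeas.comp (measurable_pi_apply j))
  have hint_each : ∀ (j k : Fin b) (i : Fin n),
      Integrable (fun w : Fin b → Ωt => Y (w j) i * Y (w k) i) π := by
    intro j k i
    refine (integrable_const ((2*G)*(2*G))).mono'
      ((hcoordmeas j i).mul (hcoordmeas k i)).aestronglyMeasurable
      (Filter.Eventually.of_forall fun w => ?_)
    rw [Real.norm_eq_abs, abs_mul]
    exact mul_le_mul (hcoord_bd _ i) (hcoord_bd _ i) (abs_nonneg _)
      (by linarith [norm_nonneg (Y (w j)), hYbd (w j)])
  have hnorm_sq_coord : ∀ v : EuclideanSpace ℝ (Fin n), ‖v‖ ^ 2 = ∑ i, v i * v i := by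
    intro v
    rw [EuclideanSpace.norm_eq, Real.sq_sqrt (by positivity)]
    simp only [Real.norm_eq_abs, sq_abs, sq, abs_mul_abs_self]
  set V : ℝ := ∫ ω, ‖Y ω‖ ^ 2 ∂ℙ with hV
  have hVi : V = ∑ i : Fin n, ∫ ω, Y ω i * Y ω i ∂ℙ := by
    rw [hV]
    rw [← integral_finset_sum]
    · apply integral_congr_ae
      exact Filter.Eventually.of_forall fun ω => hnorm_sq_coord (Y ω)
    · intro i _
      refine (integrable_const ((2*G)*(2*G))).mono'
        (((EuclideanSpace.proj (𝕜 := ℝ) i).continuous.measurable.comp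
          hYmeas).mul ((EuclideanSpace.proj (𝕜 := ℝ) i).continuous.measurable.comp
          hYmeas)).aestronglyMeasurable
        (Filter.Eventually.of_forall fun ω => ?_)
      rw [Real.norm_eq_abs, abs_mul]
      exact mul_le_mul (hcoord_bd _ i) (hcoord_bd _ i) (abs_nonneg _)
        (by linarith [norm_nonneg (Y ω), hYbd ω])
  have hval : ∀ j k : Fin b,
      (∑ i : Fin n, ∫ w : Fin b → Ωt, Y (w j) i * Y (w k) i ∂π)
        = if j = k then V else 0 := by
    intro j k
    by_cases hjk : j = k
    · subst hjk
      rw [if_pos rfl, hVi]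
      congr 1
      funext i
      exact my_pi_prod_one ℙ b (fun ω => Y ω i * Y ω i) j
    · rw [if_neg hjk]
      apply Finset.sum_eq_zero
      intro i _
      have h2 := my_pi_prod_two ℙ b (fun ω => Y ω i) j k hjk
      rw [hπ] at *
      rw [h2, hY0 i]
      norm_num
  have hH2 : ∫ w : Fin b → Ωt, ‖(b:ℝ)⁻¹ • ∑ j : Fin b, Y (w j)‖ ^ 2 ∂π ≤ G ^ 2 / b := by
    have hptw : ∀ w : Fin b → Ωt, ‖(b:ℝ)⁻¹ • ∑ j : Fin b, Y (w j)‖ ^ 2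
        = ((b:ℝ)⁻¹)^2 * ∑ j : Fin b, ∑ k : Fin b, ∑ i : Fin n, Y (w j) i * Y (w k) i := by
      intro w
      rw [norm_smul, mul_pow, Real.norm_eq_abs, sq_abs]
      congr 1
      rw [hnorm_sq_coord]
      have hsapp : ∀ i : Fin n, (∑ j : Fin b, Y (w j)) i = ∑ j : Fin b, Y (w j) i := by
        intro i
        exact map_sum (EuclideanSpace.proj (𝕜 := ℝ) i) (fun j => Y (w j)) Finset.univ
      have hswap : ∀ (f : Fin n → Fin b → Fin b → ℝ),
          ∑ i, ∑ j, ∑ k, f i j k = ∑ j, ∑ k, ∑ i, f i j k := by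
        intro f
        rw [Finset.sum_comm]
        exact Finset.sum_congr rfl fun j _ => Finset.sum_comm
      simp_rw [hsapp, Finset.sum_mul_sum]
      rw [hswap]
    simp_rw [hptw]
    rw [integral_const_mul]
    rw [integral_finset_sum _ (fun j _ => integrable_finset_sum _
      (fun k _ => integrable_finset_sum _ (fun i _ => hint_each j k i)))]
    have h1 : ∀ j : Fin b, ∫ w : Fin b → Ωt,
        ∑ k : Fin b, ∑ i : Fin n, Y (w j) i * Y (w k) i ∂π
        = ∑ k : Fin b, ∑ i : Fin n, ∫ w : Fin b → Ωt, Y (w j) i * Y (w k) i ∂π := by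
      intro j
      rw [integral_finset_sum _ (fun k _ => integrable_finset_sum _
        fun i _ => hint_each j k i)]
      exact Finset.sum_congr rfl fun k _ => integral_finset_sum _
        fun i _ => hint_each j k i
    simp_rw [h1, hval]
    simp only [Finset.sum_ite_eq, Finset.mem_univ, if_true]
    rw [Finset.sum_const, Finset.card_univ, Fintype.card_fin]
    have h3 : ((b:ℝ)⁻¹)^2 * (b • V) = V / b := by
      rw [nsmul_eq_mul]
      field_simp
    rw [h3]
    exact (div_le_div_iff_of_pos_right hbpos).2 hYsq
  -- conclusion via Cauchy-Schwarz trick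
  have hHmeas : Measurable fun w : Fin b → Ωt => ‖(b:ℝ)⁻¹ • ∑ j : Fin b, Y (w j)‖ :=
    ((Finset.measurable_sum Finset.univ fun j _ =>
      hYmeas.comp (measurable_pi_apply j)).fun_const_smul _).norm
  have hHbd : ∀ w : Fin b → Ωt, ‖(b:ℝ)⁻¹ • ∑ j : Fin b, Y (w j)‖ ≤ 2 * G := by
    intro w
    rw [norm_smul, Real.norm_eq_abs, abs_of_nonneg (inv_nonneg.2 hbpos.le)]
    have h4 : ‖∑ j : Fin b, Y (w j)‖ ≤ (b:ℝ) * (2*G) := by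
      calc ‖∑ j : Fin b, Y (w j)‖ ≤ ∑ j : Fin b, ‖Y (w j)‖ := norm_sum_le _ _
      _ ≤ ∑ _j : Fin b, 2*G := Finset.sum_le_sum fun j _ => hYbd (w j)
      _ = (b:ℝ) * (2*G) := by
          rw [Finset.sum_const, Finset.card_univ, Fintype.card_fin, nsmul_eq_mul]
    calc (b:ℝ)⁻¹ * ‖∑ j : Fin b, Y (w j)‖ ≤ (b:ℝ)⁻¹ * ((b:ℝ)*(2*G)) :=
          mul_le_mul_of_nonneg_left h4 (inv_nonneg.2 hbpos.le)
    _ = 2*G := by field_simp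
  have hHint : Integrable (fun w : Fin b → Ωt => ‖(b:ℝ)⁻¹ • ∑ j : Fin b, Y (w j)‖) π :=
    (integrable_const (2*G)).mono' hHmeas.aestronglyMeasurable
      (Filter.Eventually.of_forall fun w => by
        rw [Real.norm_eq_abs, abs_of_nonneg (norm_nonneg _)]
        exact hHbd w)
  have hH2int : Integrable (fun w : Fin b → Ωt => ‖(b:ℝ)⁻¹ • ∑ j : Fin b, Y (w j)‖ ^ 2) π :=
    (integrable_const ((2*G)^2)).mono' (hHmeas.pow_const 2).aestronglyMeasurable
      (Filter.Eventually.of_forall fun w => by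
        rw [Real.norm_eq_abs, abs_pow, sq_abs]
        exact pow_le_pow_left₀ (norm_nonneg _) (hHbd w) 2)
  set c : ℝ := ∫ w : Fin b → Ωt, ‖(b:ℝ)⁻¹ • ∑ j : Fin b, Y (w j)‖ ∂π with hc
  have hc0 : 0 ≤ c := integral_nonneg fun w => norm_nonneg _
  have hvar : c ^ 2 ≤ ∫ w : Fin b → Ωt, ‖(b:ℝ)⁻¹ • ∑ j : Fin b, Y (w j)‖ ^ 2 ∂π := by
    have hsub : Integrable (fun w : Fin b → Ωt =>
        ‖(b:ℝ)⁻¹ • ∑ j : Fin b, Y (w j)‖ ^ 2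
          - 2 * c * ‖(b:ℝ)⁻¹ • ∑ j : Fin b, Y (w j)‖) π :=
      hH2int.sub (hHint.const_mul (2*c))
    have hmul2 : Integrable (fun w : Fin b → Ωt =>
        2 * c * ‖(b:ℝ)⁻¹ • ∑ j : Fin b, Y (w j)‖) π := hHint.const_mul (2*c)
    have h0 : (0:ℝ) ≤ ∫ w : Fin b → Ωt,
        (‖(b:ℝ)⁻¹ • ∑ j : Fin b, Y (w j)‖ - c)^2 ∂π :=
      integral_nonneg fun w => sq_nonneg _
    have hexp2 : ∀ w : Fin b → Ωt, (‖(b:ℝ)⁻¹ • ∑ j : Fin b, Y (w j)‖ - c)^2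
        = ‖(b:ℝ)⁻¹ • ∑ j : Fin b, Y (w j)‖^2
          - 2*c*‖(b:ℝ)⁻¹ • ∑ j : Fin b, Y (w j)‖ + c^2 := fun w => by ring
    simp_rw [hexp2] at h0
    rw [integral_add hsub (integrable_const _),
        integral_sub hH2int hmul2, integral_const_mul] at h0
    simp only [integral_const, measure_univ, probReal_univ, ENNReal.toReal_one, smul_eq_mul, one_mul] at h0
    nlinarith [h0]
  have hc_le : c ≤ G / Real.sqrt b := by
    have h1 : c^2 ≤ G^2 / b := le_trans hvar hH2
    have h2 : c ≤ Real.sqrt (G^2 / b) := by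
      rw [← Real.sqrt_sq hc0]
      exact Real.sqrt_le_sqrt h1
    rwa [Real.sqrt_div (sq_nonneg G), Real.sqrt_sq hG0] at h2
  calc ∫ w : Fin b → Ωt, ‖(b:ℝ)⁻¹ • (∑ j : Fin b, X (w j)) - m‖ ∂π = c := by
        rw [hc]
        exact integral_congr_ae (Filter.Eventually.of_forall fun w =>
          congrArg Norm.norm (heq w))
  _ ≤ G / Real.sqrt b := hc_le


set_option maxHeartbeats 1000000 in
theorem my_grad_eq {n : ℕ} {Ωt : Type*} [MeasurableSpace Ωt] (ℙ : Measure Ωt)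
    [IsProbabilityMeasure ℙ]
    (ℓ : EuclideanSpace ℝ (Fin n) → Ωt → ℝ)
    (gradℓ : EuclideanSpace ℝ (Fin n) → Ωt → EuclideanSpace ℝ (Fin n))
    (hdiff : ∀ θ ω, HasGradientAt (fun x => ℓ x ω) (gradℓ θ ω) θ)
    (hgradmeas : Measurable fun p : EuclideanSpace ℝ (Fin n) × Ωt => gradℓ p.1 p.2)
    (G : ℝ) (hG : ∀ θ ω, ‖gradℓ θ ω‖ ≤ G)
    (hint : ∀ θ, Integrable (ℓ θ) ℙ)
    (L : EuclideanSpace ℝ (Fin n) → ℝ) (hL : ∀ θ, L θ = ∫ ω, ℓ θ ω ∂ℙ)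
    (gradL : EuclideanSpace ℝ (Fin n) → EuclideanSpace ℝ (Fin n))
    (hgradL : ∀ θ, HasGradientAt L (gradL θ) θ) (θ : EuclideanSpace ℝ (Fin n)) :
    gradL θ = ∫ ω, gradℓ θ ω ∂ℙ := by
  have hmeas' : ∀ x, Measurable fun ω => gradℓ x ω := fun x =>
    hgradmeas.comp (measurable_const.prodMk measurable_id)
  have hIntgrad : Integrable (fun ω => gradℓ θ ω) ℙ :=
    (integrable_const G).mono' (hmeas' θ).aestronglyMeasurable
      (Filter.Eventually.of_forall fun ω => hG θ ω)
  have key := hasFDerivAt_integral_of_dominated_of_fderiv_le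
    (F := fun x ω => ℓ x ω)
    (F' := fun x ω => (InnerProductSpace.toDual ℝ (EuclideanSpace ℝ (Fin n))) (gradℓ x ω))
    (x₀ := θ) (bound := fun _ => G) (s := Metric.ball θ 1) (Metric.ball_mem_nhds θ one_pos)
    (Filter.Eventually.of_forall fun x => (hint x).aestronglyMeasurable)
    (hint θ)
    ((InnerProductSpace.toDual ℝ (EuclideanSpace ℝ (Fin n))).continuous.comp_aestronglyMeasurable
      (hmeas' θ).aestronglyMeasurable)
    (Filter.Eventually.of_forall fun ω x _ => by
      simpa using hG x ω)
    (integrable_const G)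
    (Filter.Eventually.of_forall fun ω x _ => (hdiff x ω).hasFDerivAt)
  have h2 : (fun x => ∫ ω, ℓ x ω ∂ℙ) = L := by
    funext x
    exact (hL x).symm
  rw [h2] at key
  have h3 : ∫ ω, (InnerProductSpace.toDual ℝ (EuclideanSpace ℝ (Fin n))) (gradℓ θ ω) ∂ℙ
      = (InnerProductSpace.toDual ℝ (EuclideanSpace ℝ (Fin n))) (∫ ω, gradℓ θ ω ∂ℙ) :=
    (InnerProductSpace.toDual ℝ (EuclideanSpace ℝ (Fin n))).toLinearIsometry.integral_comp_comm
      (fun ω => gradℓ θ ω)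
  rw [h3] at key
  exact (InnerProductSpace.toDual ℝ (EuclideanSpace ℝ (Fin n))).injective
    ((hgradL θ).hasFDerivAt.unique key)


set_option maxHeartbeats 4000000 in
/-- summed per-step bound for Stochastic Frank–Wolfe with
gradient rescaling. The T i.i.d. batches of size b are modeled by the product
probability measure on (Fin T → Fin b → Ω); `θit t` is the t-th iterate as a
function of the sample path, `vsel` is a (measurable) linear minimization
oracle over C, `gbatch t` is the batch gradient at step t, and the step size is
η_t = ‖∇̃L(θ_t)‖·η ∈ [0,1]. The conclusion is
Σ_{t=0}^{T−1} 𝔼[η_t 𝒢(θ_t)] ≤ (L(θ₀) − min_C L) + T D G² η/√b + T M D² G² η²/2,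
with the Frank–Wolfe gap 𝒢(θ) = max_{u∈C}⟨u − θ, −∇L(θ)⟩ written as an sSup. -/
theorem sfw_gradient_rescaling_summed_bound (n : ℕ)
    (C : Set (EuclideanSpace ℝ (Fin n)))
    (hconv : Convex ℝ C) (hcomp : IsCompact C)
    (D : ℝ) (hD : 0 ≤ D) (hdiam : ∀ x ∈ C, ∀ y ∈ C, ‖x - y‖ ≤ D)
    (Ω : Type*) [MeasurableSpace Ω] (ℙ : Measure Ω) [IsProbabilityMeasure ℙ]
    (ℓ : EuclideanSpace ℝ (Fin n) → Ω → ℝ)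
    (gradℓ : EuclideanSpace ℝ (Fin n) → Ω → EuclideanSpace ℝ (Fin n))
    (hdiff : ∀ θ ω, HasGradientAt (fun x => ℓ x ω) (gradℓ θ ω) θ)
    (hgradmeas : Measurable fun p : EuclideanSpace ℝ (Fin n) × Ω => gradℓ p.1 p.2)
    (G : ℝ) (hGbound : ∀ θ ω, ‖gradℓ θ ω‖ ≤ G)
    (hint : ∀ θ, Integrable (ℓ θ) ℙ)
    (L : EuclideanSpace ℝ (Fin n) → ℝ)
    (hL : ∀ θ, L θ = ∫ ω, ℓ θ ω ∂ℙ)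
    (gradL : EuclideanSpace ℝ (Fin n) → EuclideanSpace ℝ (Fin n))
    (hgradL : ∀ θ, HasGradientAt L (gradL θ) θ)
    (M : ℝ) (hM : 0 ≤ M)
    (hsmooth : ∀ x y, ‖gradL x - gradL y‖ ≤ M * ‖x - y‖)
    (T b : ℕ) (hT : 1 ≤ T) (hb : 1 ≤ b)
    (θ0 : EuclideanSpace ℝ (Fin n)) (hθ0C : θ0 ∈ C)
    (η : ℝ) (hη0 : 0 ≤ η)
    (vsel : EuclideanSpace ℝ (Fin n) → EuclideanSpace ℝ (Fin n))
    (hvselC : ∀ y, vsel y ∈ C)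
    (hvselmin : ∀ y, ∀ u ∈ C, ⟪y, vsel y⟫ ≤ ⟪y, u⟫)
    (hvselmeas : Measurable vsel)
    (gbatch : Fin T → (Fin T → Fin b → Ω) → EuclideanSpace ℝ (Fin n))
    (θit : ℕ → (Fin T → Fin b → Ω) → EuclideanSpace ℝ (Fin n))
    (hθinit : ∀ ws, θit 0 ws = θ0)
    (hgbatch : ∀ (t : Fin T) ws,
      gbatch t ws = (b : ℝ)⁻¹ • ∑ j : Fin b, gradℓ (θit t ws) (ws t j))
    (hstep01 : ∀ (t : Fin T) ws, ‖gbatch t ws‖ * η ∈ Set.Icc (0 : ℝ) 1)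
    (hrec : ∀ (t : Fin T) ws,
      θit ((t : ℕ) + 1) ws =
        θit t ws + (‖gbatch t ws‖ * η) • (vsel (gbatch t ws) - θit t ws)) :
    (∑ t : Fin T,
        ∫ ws : Fin T → Fin b → Ω,
          (‖gbatch t ws‖ * η) *
            sSup ((fun u => ⟪u - θit t ws, -gradL (θit t ws)⟫) '' C)
          ∂(Measure.pi fun _ : Fin T => Measure.pi fun _ : Fin b => ℙ))
      ≤ (L θ0 - sInf (L '' C)) + T * D * G ^ 2 * η / Real.sqrt b
        + T * M * D ^ 2 * G ^ 2 * η ^ 2 / 2 := by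
  classical
  set πb : Measure (Fin b → Ω) := Measure.pi fun _ : Fin b => ℙ with hπb
  set πT : Measure (Fin T → Fin b → Ω) := Measure.pi fun _ : Fin T => πb with hπT
  haveI : IsProbabilityMeasure πb := by rw [hπb]; infer_instance
  haveI : IsProbabilityMeasure πT := by rw [hπT]; infer_instance
  have hΩ : Nonempty Ω := ℙ.nonempty_of_neZero
  obtain ⟨ω0⟩ := hΩ
  have hG0 : (0:ℝ) ≤ G := le_trans (norm_nonneg _) (hGbound θ0 ω0)
  have hb0 : (b:ℝ) ≠ 0 := Nat.cast_ne_zero.2 (by omega)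
  have hbpos : (0:ℝ) < b := by positivity
  have hmeasX : ∀ x : EuclideanSpace ℝ (Fin n), Measurable fun ω => gradℓ x ω := fun x =>
    hgradmeas.comp (measurable_const.prodMk measurable_id)
  have hXint : ∀ x, Integrable (fun ω => gradℓ x ω) ℙ := fun x =>
    (integrable_const G).mono' (hmeasX x).aestronglyMeasurable
      (Filter.Eventually.of_forall fun ω => hGbound x ω)
  have hgradL_eq : ∀ θ, gradL θ = ∫ ω, gradℓ θ ω ∂ℙ := fun θ =>
    my_grad_eq ℙ ℓ gradℓ hdiff hgradmeas G hGbound hint L hL gradL hgradL θ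
  have hgradLG : ∀ θ, ‖gradL θ‖ ≤ G := by
    intro θ
    rw [hgradL_eq θ]
    calc ‖∫ ω, gradℓ θ ω ∂ℙ‖ ≤ ∫ ω, ‖gradℓ θ ω‖ ∂ℙ := norm_integral_le_integral_norm _
    _ ≤ ∫ _ω, G ∂ℙ := integral_mono (hXint θ).norm (integrable_const G)
        (fun ω => hGbound θ ω)
    _ = G := by simp
  have hLcont : Continuous L := by
    rw [continuous_iff_continuousAt]
    exact fun x => (hgradL x).differentiableAt.continuousAt
  have hgradLcont : Continuous gradL := by
    refine LipschitzWith.continuous (K := ⟨M, hM⟩) (LipschitzWith.of_dist_le_mul ?_)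
    intro a b'
    rw [dist_eq_norm, dist_eq_norm]
    exact hsmooth a b'
  have hbdd : BddBelow (L '' C) := (hcomp.image hLcont).bddBelow
  obtain ⟨R, hR⟩ := hcomp.exists_bound_of_continuousOn hLcont.continuousOn
  -- the Frank-Wolfe gap identity
  have e1 : ∀ θ u : EuclideanSpace ℝ (Fin n),
      ⟪u - θ, -gradL θ⟫ = ⟪gradL θ, θ⟫ - ⟪gradL θ, u⟫ := by
    intro θ u
    rw [inner_neg_right, inner_sub_left, real_inner_comm u, real_inner_comm θ]
    ring
  have hgap : ∀ θ : EuclideanSpace ℝ (Fin n),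
      sSup ((fun u => ⟪u - θ, -gradL θ⟫) '' C) = ⟪vsel (gradL θ) - θ, -gradL θ⟫ := by
    intro θ
    apply IsGreatest.csSup_eq
    constructor
    · exact ⟨vsel (gradL θ), hvselC _, rfl⟩
    · rintro x ⟨u, hu, rfl⟩
      simp only
      rw [e1 θ u, e1 θ (vsel (gradL θ))]
      have := hvselmin (gradL θ) u hu
      linarith
  -- θit only depends on earlier coordinates
  have hdep : ∀ k : ℕ, k ≤ T → ∀ ws ws' : Fin T → Fin b → Ω,
      (∀ s : Fin T, (s : ℕ) < k → ws s = ws' s) → θit k ws = θit k ws' := by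
    intro k
    induction k with
    | zero => intro _ ws ws' _; rw [hθinit, hθinit]
    | succ k ih =>
      intro hk ws ws' hss
      have hkT : k < T := by omega
      have hθk : θit k ws = θit k ws' := ih (by omega) ws ws' fun s hs => hss s (by omega)
      have hwt : ws ⟨k, hkT⟩ = ws' ⟨k, hkT⟩ := hss ⟨k, hkT⟩ (by simp)
      have h1 := hrec ⟨k, hkT⟩ ws
      have h2 := hrec ⟨k, hkT⟩ ws'
      have h3 := hgbatch ⟨k, hkT⟩ ws
      have h4 := hgbatch ⟨k, hkT⟩ ws'
      simp only [Fin.val_mk] at h1 h2 h3 h4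
      rw [h1, h2, h3, h4, hθk, hwt]
  -- iterates stay in C
  have hmemC : ∀ k : ℕ, k ≤ T → ∀ ws, θit k ws ∈ C := by
    intro k
    induction k with
    | zero => intro _ ws; rw [hθinit]; exact hθ0C
    | succ k ih =>
      intro hk ws
      have hkT : k < T := by omega
      have h1 := hrec ⟨k, hkT⟩ ws
      simp only [Fin.val_mk] at h1
      rw [h1]
      have h01 := hstep01 ⟨k, hkT⟩ ws
      have hmem := ih (by omega) ws
      have hv := hvselC (gbatch ⟨k, hkT⟩ ws)
      have hcomb := hconv hmem hv
        (by linarith [h01.2] : (0:ℝ) ≤ 1 - ‖gbatch ⟨k, hkT⟩ ws‖ * η) h01.1 (by ring)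
      have heq2 : θit k ws + (‖gbatch ⟨k, hkT⟩ ws‖ * η) •
          (vsel (gbatch ⟨k, hkT⟩ ws) - θit k ws)
          = (1 - ‖gbatch ⟨k, hkT⟩ ws‖ * η) • θit k ws
            + (‖gbatch ⟨k, hkT⟩ ws‖ * η) • vsel (gbatch ⟨k, hkT⟩ ws) := by
        rw [smul_sub, sub_smul, one_smul]
        abel
      rw [heq2]
      exact hcomb
  -- measurability of iterates
  have hθmeas : ∀ k : ℕ, k ≤ T → Measurable (θit k) := by
    intro k
    induction k with
    | zero =>
      intro _
      have h : θit 0 = fun _ => θ0 := funext hθinit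
      rw [h]; exact measurable_const
    | succ k ih =>
      intro hk
      have hkT : k < T := by omega
      have ihm := ih (by omega)
      have hgm : Measurable (gbatch ⟨k, hkT⟩) := by
        have hg : gbatch ⟨k, hkT⟩ = fun ws =>
            (b:ℝ)⁻¹ • ∑ j : Fin b, gradℓ (θit k ws) (ws ⟨k, hkT⟩ j) :=
          funext fun ws => hgbatch ⟨k, hkT⟩ ws
        rw [hg]
        exact (Finset.measurable_sum _ fun j _ => hgradmeas.comp
          (ihm.prodMk ((measurable_pi_apply j).comp
            (measurable_pi_apply (⟨k, hkT⟩ : Fin T)) : Measurable fun ws : Fin T → Fin b → Ω => ws ⟨k, hkT⟩ j))).fun_const_smul _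
      have hθ1 : θit (k+1) = fun ws => θit k ws
          + (‖gbatch ⟨k, hkT⟩ ws‖ * η) • (vsel (gbatch ⟨k, hkT⟩ ws) - θit k ws) :=
        funext fun ws => hrec ⟨k, hkT⟩ ws
      rw [hθ1]
      exact ihm.add ((hgm.norm.mul_const η).smul ((hvselmeas.comp hgm).sub ihm))
  have hgmeas : ∀ t : Fin T, Measurable (gbatch t) := by
    intro t
    have hg : gbatch t = fun ws =>
        (b:ℝ)⁻¹ • ∑ j : Fin b, gradℓ (θit t ws) (ws t j) := funext (hgbatch t)
    rw [hg]
    exact (Finset.measurable_sum _ fun j _ => hgradmeas.comp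
      ((hθmeas t (le_of_lt t.2)).prodMk ((measurable_pi_apply j).comp
        (measurable_pi_apply t) : Measurable fun ws : Fin T → Fin b → Ω => ws t j))).fun_const_smul _
  -- batch gradient bound
  have hgB : ∀ (t : Fin T) ws, ‖gbatch t ws‖ ≤ G := by
    intro t ws
    rw [hgbatch t ws, norm_smul, Real.norm_eq_abs, abs_of_nonneg (inv_nonneg.2 hbpos.le)]
    have h4 : ‖∑ j : Fin b, gradℓ (θit t ws) (ws t j)‖ ≤ (b:ℝ) * G := by
      calc ‖∑ j : Fin b, gradℓ (θit t ws) (ws t j)‖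
          ≤ ∑ j : Fin b, ‖gradℓ (θit t ws) (ws t j)‖ := norm_sum_le _ _
      _ ≤ ∑ _j : Fin b, G := Finset.sum_le_sum fun j _ => hGbound _ _
      _ = (b:ℝ) * G := by
          rw [Finset.sum_const, Finset.card_univ, Fintype.card_fin, nsmul_eq_mul]
    calc (b:ℝ)⁻¹ * ‖∑ j : Fin b, gradℓ (θit t ws) (ws t j)‖
        ≤ (b:ℝ)⁻¹ * ((b:ℝ) * G) := mul_le_mul_of_nonneg_left h4 (inv_nonneg.2 hbpos.le)
    _ = G := by field_simp
  -- pointwise key inequality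
  have hkey : ∀ (t : Fin T) (ws : Fin T → Fin b → Ω),
      (‖gbatch t ws‖ * η) *
          ⟪vsel (gradL (θit t ws)) - θit t ws, -gradL (θit t ws)⟫
        ≤ (L (θit t ws) - L (θit ((t:ℕ)+1) ws))
          + G * η * D * ‖gbatch t ws - gradL (θit t ws)‖
          + M / 2 * (G*η)^2 * D^2 := by
    intro t ws
    have hθC : θit t ws ∈ C := hmemC t (le_of_lt t.2) ws
    have hvC := hvselC (gbatch t ws)
    have huC := hvselC (gradL (θit t ws))
    have h01 := hstep01 t ws
    have hr0 : (0:ℝ) ≤ ‖gbatch t ws‖ * η := h01.1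
    have hrG : ‖gbatch t ws‖ * η ≤ G * η := mul_le_mul_of_nonneg_right (hgB t ws) hη0
    have hstep := hrec t ws
    have hdesc := my_descent L gradL hgradL M hM hsmooth (θit t ws)
      (θit t ws + (‖gbatch t ws‖ * η) • (vsel (gbatch t ws) - θit t ws))
    rw [add_sub_cancel_left, ← hstep] at hdesc
    set θ := θit t ws
    set g := gbatch t ws
    set gL := gradL θ
    set v := vsel g
    set u := vsel gL
    set r := ‖g‖ * η with hrdef
    have his : ⟪gL, r • (v - θ)⟫ = r * ⟪gL, v - θ⟫ := real_inner_smul_right _ _ _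
    have hnrm : ‖r • (v - θ)‖^2 = r^2 * ‖v - θ‖^2 := by
      rw [norm_smul, Real.norm_eq_abs, mul_pow, sq_abs]
    have hvθD : ‖v - θ‖ ≤ D := hdiam v hvC θ hθC
    have huvD : ‖u - v‖ ≤ D := hdiam u huC v hvC
    have hq : M/2 * ‖r • (v - θ)‖^2 ≤ M/2 * (G*η)^2 * D^2 := by
      rw [hnrm]
      have h5 : r^2 ≤ (G*η)^2 := pow_le_pow_left₀ hr0 hrG 2
      have h6 : ‖v-θ‖^2 ≤ D^2 := pow_le_pow_left₀ (norm_nonneg _) hvθD 2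
      have h7 : r^2 * ‖v-θ‖^2 ≤ (G*η)^2 * D^2 :=
        mul_le_mul h5 h6 (sq_nonneg _) (sq_nonneg _)
      nlinarith [h7, hM]
    have key1 : ⟪g, v⟫ ≤ ⟪g, u⟫ := hvselmin g u huC
    have expand : ⟪g - gL, u - v⟫ = ⟪g,u⟫ - ⟪g,v⟫ - ⟪gL,u⟫ + ⟪gL,v⟫ := by
      rw [inner_sub_left, inner_sub_right, inner_sub_right]
      ring
    have cs : ⟪g - gL, u - v⟫ ≤ ‖g - gL‖ * ‖u - v‖ := real_inner_le_norm _ _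
    have hiv : ⟪gL, v - θ⟫ = ⟪gL, v⟫ - ⟪gL, θ⟫ := inner_sub_right _ _ _
    have main1 : ⟪u - θ, -gL⟫ ≤ -⟪gL, v - θ⟫ + ‖g - gL‖ * ‖u - v‖ := by
      rw [e1 θ u, hiv]
      linarith [key1, cs, expand]
    have main2 : r * ⟪u - θ, -gL⟫ ≤ r * (-⟪gL, v - θ⟫ + ‖g - gL‖ * ‖u - v‖) :=
      mul_le_mul_of_nonneg_left main1 hr0
    have hnoise : r * (‖g - gL‖ * ‖u - v‖) ≤ G * η * D * ‖g - gL‖ := by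
      have ha : r * ‖g - gL‖ ≤ (G*η) * ‖g - gL‖ :=
        mul_le_mul_of_nonneg_right hrG (norm_nonneg _)
      have hbb : r * ‖g - gL‖ * ‖u - v‖ ≤ (G*η) * ‖g - gL‖ * D :=
        mul_le_mul ha huvD (norm_nonneg _) (by positivity)
      calc r * (‖g-gL‖*‖u-v‖) = r * ‖g-gL‖ * ‖u-v‖ := by ring
      _ ≤ (G*η)*‖g-gL‖*D := hbb
      _ = G*η*D*‖g-gL‖ := by ring
    have hdesc2 : - (r * ⟪gL, v - θ⟫)
        ≤ L θ - L (θit ((t:ℕ)+1) ws) + M/2 * ‖r • (v-θ)‖^2 := by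
      rw [his] at hdesc
      linarith
    have hsplit : r * (-⟪gL, v - θ⟫ + ‖g - gL‖ * ‖u - v‖)
        = -(r * ⟪gL,v-θ⟫) + r * (‖g-gL‖*‖u-v‖) := by ring
    rw [hsplit] at main2
    linarith [main2, hnoise, hdesc2, hq]
  -- rewrite the sSup in the goal
  have hsum_eq : (∑ t : Fin T, ∫ ws : Fin T → Fin b → Ω,
      (‖gbatch t ws‖ * η) *
        sSup ((fun u => ⟪u - θit t ws, -gradL (θit t ws)⟫) '' C) ∂πT)
      = ∑ t : Fin T, ∫ ws : Fin T → Fin b → Ω,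
        (‖gbatch t ws‖ * η) *
          ⟪vsel (gradL (θit t ws)) - θit t ws, -gradL (θit t ws)⟫ ∂πT := by
    refine Finset.sum_congr rfl fun t _ => ?_
    apply integral_congr_ae
    exact Filter.Eventually.of_forall fun ws =>
      congrArg (fun z => (‖gbatch t ws‖ * η) * z) (hgap (θit t ws))
  rw [hsum_eq]
  -- integrability facts
  have hfmeas : ∀ t : Fin T, Measurable fun ws : Fin T → Fin b → Ω =>
      (‖gbatch t ws‖ * η) *
        ⟪vsel (gradL (θit t ws)) - θit t ws, -gradL (θit t ws)⟫ := by
    intro t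
    have hθm := hθmeas t (le_of_lt t.2)
    have hgLm : Measurable fun ws : Fin T → Fin b → Ω => gradL (θit t ws) :=
      hgradLcont.measurable.comp hθm
    exact ((hgmeas t).norm.mul_const η).mul
      (((hvselmeas.comp hgLm).sub hθm).inner hgLm.neg)
  have hgapbd : ∀ (t : Fin T) ws,
      |⟪vsel (gradL (θit t ws)) - θit t ws, -gradL (θit t ws)⟫| ≤ D * G := by
    intro t ws
    calc |⟪vsel (gradL (θit t ws)) - θit t ws, -gradL (θit t ws)⟫|
        ≤ ‖vsel (gradL (θit t ws)) - θit t ws‖ * ‖-gradL (θit t ws)‖ :=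
          abs_real_inner_le_norm _ _
    _ ≤ D * G := by
        rw [norm_neg]
        exact mul_le_mul (hdiam _ (hvselC _) _ (hmemC t (le_of_lt t.2) ws))
          (hgradLG _) (norm_nonneg _) hD
  have hfint : ∀ t : Fin T, Integrable (fun ws : Fin T → Fin b → Ω =>
      (‖gbatch t ws‖ * η) *
        ⟪vsel (gradL (θit t ws)) - θit t ws, -gradL (θit t ws)⟫) πT := by
    intro t
    refine (integrable_const ((G*η)*(D*G))).mono' (hfmeas t).aestronglyMeasurable
      (Filter.Eventually.of_forall fun ws => ?_)
    rw [Real.norm_eq_abs, abs_mul]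
    refine mul_le_mul ?_ (hgapbd t ws) (abs_nonneg _) (by positivity)
    rw [abs_of_nonneg (hstep01 t ws).1]
    exact mul_le_mul_of_nonneg_right (hgB t ws) hη0
  have hLint : ∀ k : ℕ, k ≤ T → Integrable (fun ws => L (θit k ws)) πT := by
    intro k hk
    refine (integrable_const R).mono'
      ((hLcont.measurable.comp (hθmeas k hk)).aestronglyMeasurable)
      (Filter.Eventually.of_forall fun ws => ?_)
    exact hR _ (hmemC k hk ws)
  have hΔmeas : ∀ t : Fin T,
      Measurable fun ws : Fin T → Fin b → Ω => ‖gbatch t ws - gradL (θit t ws)‖ :=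
    fun t => ((hgmeas t).sub
      (hgradLcont.measurable.comp (hθmeas t (le_of_lt t.2)))).norm
  have hΔbd : ∀ (t : Fin T) ws, ‖gbatch t ws - gradL (θit t ws)‖ ≤ 2*G := by
    intro t ws
    calc ‖gbatch t ws - gradL (θit t ws)‖
        ≤ ‖gbatch t ws‖ + ‖gradL (θit t ws)‖ := norm_sub_le _ _
    _ ≤ 2*G := by linarith [hgB t ws, hgradLG (θit t ws)]
  have hΔint : ∀ t : Fin T,
      Integrable (fun ws : Fin T → Fin b → Ω => ‖gbatch t ws - gradL (θit t ws)‖) πT := by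
    intro t
    refine (integrable_const (2*G)).mono' (hΔmeas t).aestronglyMeasurable
      (Filter.Eventually.of_forall fun ws => ?_)
    rw [Real.norm_eq_abs, abs_of_nonneg (norm_nonneg _)]
    exact hΔbd t ws
  -- conditional variance bound
  have hDbound : ∀ t : Fin T,
      ∫ ws, ‖gbatch t ws - gradL (θit t ws)‖ ∂πT ≤ G / Real.sqrt b := by
    intro t
    set F : (Fin T → Fin b → Ω) → ℝ :=
      fun ws => ‖gbatch t ws - gradL (θit t ws)‖ with hF
    have hFmeas : Measurable F := hΔmeas t
    have hFbd : ∀ ws, |F ws| ≤ 2*G := fun ws => by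
      rw [hF, abs_of_nonneg (norm_nonneg _)]
      exact hΔbd t ws
    set p : Fin T → Prop := fun s => s ≠ t with hp
    haveI hdp : DecidablePred p := Classical.decPred p
    haveI : Unique {s : Fin T // ¬ p s} :=
      { default := ⟨t, not_not_intro rfl⟩
        uniq := fun s => Subtype.ext (not_not.mp s.2) }
    set e := MeasurableEquiv.piEquivPiSubtypeProd (fun _ : Fin T => (Fin b → Ω)) p with he
    have hmp := measurePreserving_piEquivPiSubtypeProd (fun _ : Fin T => πb) p
    set μ1 : Measure ({s : Fin T // p s} → Fin b → Ω) := Measure.pi fun _ => πb with hμ1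
    set μ2 : Measure ({s : Fin T // ¬ p s} → Fin b → Ω) := Measure.pi fun _ => πb with hμ2
    haveI : IsProbabilityMeasure μ1 := by rw [hμ1]; infer_instance
    haveI : IsProbabilityMeasure μ2 := by rw [hμ2]; infer_instance
    have h1 : ∫ ws, F ws ∂πT = ∫ y, F (e.symm y) ∂(μ1.prod μ2) := by
      have h2 := hmp.integral_comp' (f := e) (fun y => F (e.symm y))
      simp only [MeasurableEquiv.symm_apply_apply] at h2
      rw [hπT]
      exact h2
    rw [h1]
    have hIntF : Integrable (fun y => F (e.symm y)) (μ1.prod μ2) :=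
      (integrable_const (2*G)).mono' (hFmeas.comp e.symm.measurable).aestronglyMeasurable
        (Filter.Eventually.of_forall fun y => by
          rw [Real.norm_eq_abs]; exact hFbd _)
    rw [integral_prod _ hIntF]
    have hinner : ∀ x : {s : Fin T // p s} → Fin b → Ω,
        ∫ z, F (e.symm (x, z)) ∂μ2 ≤ G / Real.sqrt b := by
      intro x
      set θx := θit t (e.symm (x, fun _ _ => ω0)) with hθx
      have hsymm_app : ∀ (z : {s : Fin T // ¬ p s} → Fin b → Ω) (s : Fin T),
          e.symm (x, z) s = if h : p s then x ⟨s, h⟩ else z ⟨s, h⟩ := by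
        intro z s
        rfl
      have hθeq : ∀ z, θit t (e.symm (x, z)) = θx := by
        intro z
        apply hdep t (le_of_lt t.2)
        intro s hs
        have hps : p s := by
          rw [hp]
          intro hst
          rw [hst] at hs
          omega
        rw [hsymm_app, hsymm_app, dif_pos hps, dif_pos hps]
      have hwt : ∀ z : {s : Fin T // ¬ p s} → Fin b → Ω,
          e.symm (x, z) t = z ⟨t, not_not_intro rfl⟩ := by
        intro z
        rw [hsymm_app]
        rw [dif_neg (not_not_intro rfl)]
      have hFz : ∀ z, F (e.symm (x, z))
          = ‖(b:ℝ)⁻¹ • (∑ j : Fin b, gradℓ θx ((z ⟨t, not_not_intro rfl⟩) j))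
              - ∫ ω, gradℓ θx ω ∂ℙ‖ := by
        intro z
        rw [hF]
        simp only
        rw [hgbatch t (e.symm (x,z)), hθeq z, hwt z, ← hgradL_eq θx]
      have hmp2 := measurePreserving_funUnique πb {s : Fin T // ¬ p s}
      have h3 : ∫ z, F (e.symm (x, z)) ∂μ2
          = ∫ w : Fin b → Ω, ‖(b:ℝ)⁻¹ • (∑ j : Fin b, gradℓ θx (w j))
              - ∫ ω, gradℓ θx ω ∂ℙ‖ ∂πb := by
        have h4 := hmp2.integral_comp'
          (f := MeasurableEquiv.funUnique {s : Fin T // ¬ p s} (Fin b → Ω))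
          (fun w : Fin b → Ω => ‖(b:ℝ)⁻¹ • (∑ j : Fin b, gradℓ θx (w j))
              - ∫ ω, gradℓ θx ω ∂ℙ‖)
        have h5 : ∀ z : {s : Fin T // ¬ p s} → Fin b → Ω,
            F (e.symm (x, z)) = (fun w : Fin b → Ω =>
              ‖(b:ℝ)⁻¹ • (∑ j : Fin b, gradℓ θx (w j)) - ∫ ω, gradℓ θx ω ∂ℙ‖)
              ((MeasurableEquiv.funUnique {s : Fin T // ¬ p s} (Fin b → Ω)) z) := by
          intro z
          rw [hFz z]
          simp only [MeasurableEquiv.funUnique_apply]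
          have hd : (⟨t, not_not_intro rfl⟩ : {s : Fin T // ¬ p s}) = default :=
            Subsingleton.elim _ _
          rw [hd]
        rw [hμ2]
        calc ∫ z, F (e.symm (x, z)) ∂(Measure.pi fun _ : {s : Fin T // ¬ p s} => πb)
            = ∫ z, (fun w : Fin b → Ω =>
                ‖(b:ℝ)⁻¹ • (∑ j : Fin b, gradℓ θx (w j)) - ∫ ω, gradℓ θx ω ∂ℙ‖)
                ((MeasurableEquiv.funUnique {s : Fin T // ¬ p s} (Fin b → Ω)) z)
                ∂(Measure.pi fun _ : {s : Fin T // ¬ p s} => πb) :=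
              integral_congr_ae (Filter.Eventually.of_forall h5)
        _ = ∫ w : Fin b → Ω, ‖(b:ℝ)⁻¹ • (∑ j : Fin b, gradℓ θx (w j))
              - ∫ ω, gradℓ θx ω ∂ℙ‖ ∂πb := by
            convert h4 using 2
            congr!
      rw [h3, hπb]
      exact my_core ℙ n b hb (fun ω => gradℓ θx ω) (hmeasX θx) G hG0
        (fun ω => hGbound θx ω)
    calc ∫ x, ∫ z, F (e.symm (x, z)) ∂μ2 ∂μ1
        ≤ ∫ _x, G / Real.sqrt b ∂μ1 :=
          integral_mono hIntF.integral_prod_left (integrable_const _) hinner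
    _ = G / Real.sqrt b := by simp
  -- assembling
  have hcast : ((Finset.univ : Finset (Fin T)).card : ℝ) = (T : ℝ) := by
    rw [Finset.card_univ, Fintype.card_fin]
  have hstepA : ∑ t : Fin T, (∫ ws : Fin T → Fin b → Ω,
      (‖gbatch t ws‖ * η) *
        ⟪vsel (gradL (θit t ws)) - θit t ws, -gradL (θit t ws)⟫ ∂πT)
      ≤ ∑ t : Fin T, ∫ ws : Fin T → Fin b → Ω,
        ((L (θit t ws) - L (θit ((t:ℕ)+1) ws))
          + G * η * D * ‖gbatch t ws - gradL (θit t ws)‖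
          + M / 2 * (G*η)^2 * D^2) ∂πT := by
    refine Finset.sum_le_sum fun t _ => ?_
    refine integral_mono (hfint t) ?_ (hkey t)
    exact (((hLint t (le_of_lt t.2)).sub (hLint ((t:ℕ)+1) t.2)).add
      ((hΔint t).const_mul (G*η*D))).add (integrable_const _)
  have hstepB : ∀ t : Fin T, ∫ ws : Fin T → Fin b → Ω,
      ((L (θit t ws) - L (θit ((t:ℕ)+1) ws))
        + G * η * D * ‖gbatch t ws - gradL (θit t ws)‖
        + M / 2 * (G*η)^2 * D^2) ∂πT
      = ((∫ ws, L (θit t ws) ∂πT) - ∫ ws, L (θit ((t:ℕ)+1) ws) ∂πT)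
        + G * η * D * (∫ ws, ‖gbatch t ws - gradL (θit t ws)‖ ∂πT)
        + M / 2 * (G*η)^2 * D^2 := by
    intro t
    have i1 : Integrable (fun ws => L (θit t ws) - L (θit ((t:ℕ)+1) ws)) πT :=
      (hLint t (le_of_lt t.2)).sub (hLint ((t:ℕ)+1) t.2)
    have i2 : Integrable (fun ws : Fin T → Fin b → Ω =>
        G * η * D * ‖gbatch t ws - gradL (θit t ws)‖) πT :=
      (hΔint t).const_mul (G*η*D)
    have i12 : Integrable (fun ws : Fin T → Fin b → Ω =>
        (L (θit t ws) - L (θit ((t:ℕ)+1) ws))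
          + G * η * D * ‖gbatch t ws - gradL (θit t ws)‖) πT := i1.add i2
    rw [integral_add i12 (integrable_const _), integral_add i1 i2,
        integral_sub (hLint t (le_of_lt t.2)) (hLint ((t:ℕ)+1) t.2),
        integral_const_mul]
    simp [measure_univ]
  have htel : ∑ t : Fin T,
      ((∫ ws, L (θit t ws) ∂πT) - ∫ ws, L (θit ((t:ℕ)+1) ws) ∂πT)
      ≤ L θ0 - sInf (L '' C) := by
    have h5 : ∑ t : Fin T,
        ((∫ ws, L (θit t ws) ∂πT) - ∫ ws, L (θit ((t:ℕ)+1) ws) ∂πT)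
        = (∫ ws, L (θit 0 ws) ∂πT) - ∫ ws, L (θit T ws) ∂πT := by
      rw [Fin.sum_univ_eq_sum_range
        (fun k => (∫ ws, L (θit k ws) ∂πT) - ∫ ws, L (θit (k+1) ws) ∂πT) T]
      exact Finset.sum_range_sub' (fun k => ∫ ws, L (θit k ws) ∂πT) T
    rw [h5]
    have h6 : ∫ ws, L (θit 0 ws) ∂πT = L θ0 := by
      have : (fun ws : Fin T → Fin b → Ω => L (θit 0 ws)) = fun _ => L θ0 :=
        funext fun ws => by rw [hθinit]
      rw [this]
      simp [measure_univ]
    have h7 : sInf (L '' C) ≤ ∫ ws, L (θit T ws) ∂πT := by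
      have h8 : ∫ _ws : Fin T → Fin b → Ω, sInf (L '' C) ∂πT
          ≤ ∫ ws, L (θit T ws) ∂πT := by
        refine integral_mono (integrable_const _) (hLint T le_rfl) fun ws => ?_
        exact csInf_le hbdd ⟨θit T ws, hmemC T le_rfl ws, rfl⟩
      simpa [measure_univ] using h8
    linarith
  have hnoise2 : ∑ t : Fin T,
      G * η * D * (∫ ws, ‖gbatch t ws - gradL (θit t ws)‖ ∂πT)
      ≤ (T:ℝ) * (G * η * D * (G / Real.sqrt b)) := by
    calc ∑ t : Fin T, G * η * D * (∫ ws, ‖gbatch t ws - gradL (θit t ws)‖ ∂πT)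
        ≤ ∑ _t : Fin T, G * η * D * (G / Real.sqrt b) :=
          Finset.sum_le_sum fun t _ =>
            mul_le_mul_of_nonneg_left (hDbound t) (by positivity)
    _ = (T:ℝ) * (G * η * D * (G / Real.sqrt b)) := by
        rw [Finset.sum_const, Finset.card_univ, Fintype.card_fin, nsmul_eq_mul]
  calc ∑ t : Fin T, ∫ ws : Fin T → Fin b → Ω,
        (‖gbatch t ws‖ * η) *
          ⟪vsel (gradL (θit t ws)) - θit t ws, -gradL (θit t ws)⟫ ∂πT
      ≤ ∑ t : Fin T, ∫ ws : Fin T → Fin b → Ω,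
        ((L (θit t ws) - L (θit ((t:ℕ)+1) ws))
          + G * η * D * ‖gbatch t ws - gradL (θit t ws)‖
          + M / 2 * (G*η)^2 * D^2) ∂πT := hstepA
  _ = ∑ t : Fin T, (((∫ ws, L (θit t ws) ∂πT) - ∫ ws, L (θit ((t:ℕ)+1) ws) ∂πT)
        + G * η * D * (∫ ws, ‖gbatch t ws - gradL (θit t ws)‖ ∂πT)
        + M / 2 * (G*η)^2 * D^2) :=
      Finset.sum_congr rfl fun t _ => hstepB t
  _ = (∑ t : Fin T, ((∫ ws, L (θit t ws) ∂πT) - ∫ ws, L (θit ((t:ℕ)+1) ws) ∂πT))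
        + (∑ t : Fin T, G * η * D * (∫ ws, ‖gbatch t ws - gradL (θit t ws)‖ ∂πT))
        + (T:ℝ) * (M / 2 * (G*η)^2 * D^2) := by
      rw [Finset.sum_add_distrib, Finset.sum_add_distrib, Finset.sum_const,
        Finset.card_univ, Fintype.card_fin, nsmul_eq_mul]
  _ ≤ (L θ0 - sInf (L '' C)) + (T:ℝ) * (G * η * D * (G / Real.sqrt b))
        + (T:ℝ) * (M / 2 * (G*η)^2 * D^2) :=
      add_le_add (add_le_add htel hnoise2) le_rfl
  _ = (L θ0 - sInf (L '' C)) + T * D * G ^ 2 * η / Real.sqrt b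
        + T * M * D ^ 2 * G ^ 2 * η ^ 2 / 2 := by ring
end
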